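/- arXiv:1704.00937 — 6 statements merged into one kernel-verified Lean document; each statement's English description precedes it below -/
import Mathlib

section
/- Let G be a connected graph with at least one edge. Then l(G) = 1 if and only if G is a path graph. -/
/-- The transformation of `{1,…,n}` sending `a` to `b` and fixing all other points. -/
def arcT {n : ℕ} (a b : Fin n) : Fin n → Fin n := fun v => if v = a then b else v

/-- The semigroup `⟨D⟩` generated by the arcs of the digraph `D`; transformations act on
the right, so a product `ε₁ε₂⋯ε_k` is the function `ε_k ∘ ⋯ ∘ ε₁`. -/
def genSg {n : ℕ} (D : Set (Fin n × Fin n)) : Set (Fin n → Fin n) :=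
  { α | ∃ l : List (Fin n × Fin n), l ≠ [] ∧ (∀ p ∈ l, p ∈ D) ∧
      α = l.foldl (fun f p => arcT p.1 p.2 ∘ f) id }

/-- The product `x·y` in the right-action convention: apply `x` first, then `y`. -/
def sgMul {n : ℕ} (x y : Fin n → Fin n) : Fin n → Fin n := y ∘ x

/-- The right ideal `xS¹ = {x} ∪ xS`. -/
def rIdeal {n : ℕ} (S : Set (Fin n → Fin n)) (x : Fin n → Fin n) : Set (Fin n → Fin n) :=
  insert x { y | ∃ s ∈ S, y = sgMul x s }

/-- The left ideal `S¹x = {x} ∪ Sx`. -/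
def lIdeal {n : ℕ} (S : Set (Fin n → Fin n)) (x : Fin n → Fin n) : Set (Fin n → Fin n) :=
  insert x { y | ∃ s ∈ S, y = sgMul s x }

/-- The two-sided ideal `S¹xS¹`. -/
def jIdeal {n : ℕ} (S : Set (Fin n → Fin n)) (x : Fin n → Fin n) : Set (Fin n → Fin n) :=
  { y | ∃ s ∈ insert id S, ∃ t ∈ insert id S, y = sgMul s (sgMul x t) }

def RRel {n : ℕ} (S : Set (Fin n → Fin n)) (x y : Fin n → Fin n) : Prop :=
  rIdeal S x = rIdeal S y

def LRel {n : ℕ} (S : Set (Fin n → Fin n)) (x y : Fin n → Fin n) : Prop :=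
  lIdeal S x = lIdeal S y

def JRel {n : ℕ} (S : Set (Fin n → Fin n)) (x y : Fin n → Fin n) : Prop :=
  jIdeal S x = jIdeal S y

def RTrivial {n : ℕ} (S : Set (Fin n → Fin n)) : Prop :=
  ∀ x ∈ S, ∀ y ∈ S, RRel S x y → x = y

def LTrivial {n : ℕ} (S : Set (Fin n → Fin n)) : Prop :=
  ∀ x ∈ S, ∀ y ∈ S, LRel S x y → x = y

def HTrivial {n : ℕ} (S : Set (Fin n → Fin n)) : Prop :=
  ∀ x ∈ S, ∀ y ∈ S, RRel S x y → LRel S x y → x = y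

def JTrivial {n : ℕ} (S : Set (Fin n → Fin n)) : Prop :=
  ∀ x ∈ S, ∀ y ∈ S, JRel S x y → x = y

/-- `α` has a cycle of length `k`: `k` distinct points `a₀,…,a_{k-1}` with
`α(aᵢ) = a_{i+1 mod k}`. -/
def IsCycleOf {n : ℕ} (α : Fin n → Fin n) (k : ℕ) : Prop :=
  0 < k ∧ ∃ a : ZMod k → Fin n, Function.Injective a ∧ ∀ i, α (a i) = a (i + 1)

/-- `l(D)`: the maximal length of a cycle of an element of `⟨D⟩`. -/
noncomputable def lD {n : ℕ} (D : Set (Fin n × Fin n)) : ℕ :=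
  sSup { k | ∃ α ∈ genSg D, IsCycleOf α k }

/-- The arc set of a graph. -/
def arcsOf {n : ℕ} (G : SimpleGraph (Fin n)) : Set (Fin n × Fin n) :=
  { p | G.Adj p.1 p.2 }

/-- `l(G)` for a graph `G`. -/
noncomputable def lG {n : ℕ} (G : SimpleGraph (Fin n)) : ℕ := lD (arcsOf G)

/-- Reachability along directed walks of `D`. -/
def dreach {n : ℕ} (D : Set (Fin n × Fin n)) : Fin n → Fin n → Prop :=
  Relation.ReflTransGen (fun a b => (a, b) ∈ D)

/-- The strong component of the vertex `v`. -/
def strongComp {n : ℕ} (D : Set (Fin n × Fin n)) (v : Fin n) : Set (Fin n) :=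
  { u | dreach D u v ∧ dreach D v u }

/-- The underlying graph of the digraph `D`. -/
def underlying {n : ℕ} (D : Set (Fin n × Fin n)) : SimpleGraph (Fin n) where
  Adj a b := a ≠ b ∧ ((a, b) ∈ D ∨ (b, a) ∈ D)
  symm := ⟨fun a b h => ⟨h.1.symm, h.2.symm⟩⟩
  loopless := ⟨fun a h => h.1 rfl⟩

/-- `v 0, v 1, …, v r` is a cycle of the digraph `D`. -/
def IsDCycle {n : ℕ} (D : Set (Fin n × Fin n)) (r : ℕ) (v : ℕ → Fin n) : Prop :=
  1 ≤ r ∧ v r = v 0 ∧ (∀ i < r, ∀ j < r, v i = v j → i = j) ∧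
    ∀ i < r, (v i, v (i + 1)) ∈ D

def HasDCycle {n : ℕ} (D : Set (Fin n × Fin n)) : Prop := ∃ r v, IsDCycle D r v

def DAcyclic {n : ℕ} (D : Set (Fin n × Fin n)) : Prop := ¬ HasDCycle D

/-- `G` is a subgroup contained in the transformation semigroup `S`. -/
def IsSubgroupIn {n : ℕ} (S G : Set (Fin n → Fin n)) : Prop :=
  G ⊆ S ∧ (∀ x ∈ G, ∀ y ∈ G, sgMul x y ∈ G) ∧
    ∃ e ∈ G, (∀ x ∈ G, sgMul e x = x ∧ sgMul x e = x) ∧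
      ∀ x ∈ G, ∃ y ∈ G, sgMul x y = e ∧ sgMul y x = e

/-- Every subgroup of `S` is trivial. -/
def SgAperiodic {n : ℕ} (S : Set (Fin n → Fin n)) : Prop :=
  ∀ G, IsSubgroupIn S G → G.Subsingleton
section Aux

variable {n : ℕ}

/-- The set of cycle lengths of elements of `⟨D⟩`. -/
def cycSet (D : Set (Fin n × Fin n)) : Set ℕ :=
  { k | ∃ α ∈ genSg D, IsCycleOf α k }

lemma cycSet_le (D : Set (Fin n × Fin n)) {k : ℕ} (hk : k ∈ cycSet D) : k ≤ n := by
  obtain ⟨α, -, hpos, a, ha, -⟩ := hk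
  haveI : NeZero k := ⟨hpos.ne'⟩
  have := Fintype.card_le_of_injective a ha
  simpa [ZMod.card] using this

lemma cycSet_bdd (D : Set (Fin n × Fin n)) : BddAbove (cycSet D) :=
  ⟨n, fun _ hk => cycSet_le D hk⟩

lemma lD_eq_sSup (D : Set (Fin n × Fin n)) : lD D = sSup (cycSet D) := rfl

lemma le_lD {D : Set (Fin n × Fin n)} {k : ℕ} (hk : k ∈ cycSet D) : k ≤ lD D :=
  le_csSup (cycSet_bdd D) hk

lemma lD_eq_one_of {D : Set (Fin n × Fin n)} (h1 : 1 ∈ cycSet D)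
    (h : ∀ k ∈ cycSet D, k ≤ 1) : lD D = 1 :=
  le_antisymm (csSup_le ⟨1, h1⟩ h) (le_lD h1)

/-- membership of a single generator -/
lemma arcT_mem_genSg {D : Set (Fin n × Fin n)} {a b : Fin n} (h : (a, b) ∈ D) :
    arcT a b ∈ genSg D := by
  refine ⟨[(a, b)], by simp, by simp [h], ?_⟩
  simp [List.foldl]

/-- a fixed point gives a 1-cycle -/
lemma isCycleOf_one {α : Fin n → Fin n} {w : Fin n} (hw : α w = w) : IsCycleOf α 1 := by
  refine ⟨one_pos, fun _ => w, fun i j _ => Subsingleton.elim i j, fun i => hw⟩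

/-- a transposed pair gives a 2-cycle -/
lemma isCycleOf_two {α : Fin n → Fin n} {p q : Fin n} (hpq : p ≠ q)
    (h1 : α p = q) (h2 : α q = p) : IsCycleOf α 2 := by
  refine ⟨two_pos, fun i => if i = 0 then p else q, ?_, ?_⟩
  · intro i j hij
    have h01 : ∀ i : ZMod 2, i = 0 ∨ i = 1 := by decide
    rcases h01 i with rfl | rfl <;> rcases h01 j with rfl | rfl <;>
      simp_all [show (1 : ZMod 2) ≠ 0 by decide]
  · intro i
    have h01 : ∀ i : ZMod 2, i = 0 ∨ i = 1 := by decide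
    rcases h01 i with rfl | rfl <;>
      simp [h1, h2, show (1+1 : ZMod 2) = 0 by decide, show (1 : ZMod 2) ≠ 0 by decide]

end Aux
section PathSide

variable {n : ℕ}

lemma conj_arcT (f : Fin n ≃ Fin n) (a b : Fin n) :
    ⇑f ∘ arcT a b ∘ ⇑f.symm = arcT (f a) (f b) := by
  funext v
  simp only [Function.comp_apply, arcT]
  by_cases h : f.symm v = a
  · simp [(Equiv.symm_apply_eq f).mp h]
  · have : v ≠ f a := by
      intro hv; exact h (by simp [hv])
    simp [h, this]

lemma monotone_arcT_path {a b : Fin n} (h : (SimpleGraph.pathGraph n).Adj a b) :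
    Monotone (arcT a b) := by
  rw [SimpleGraph.pathGraph_adj] at h
  intro x y hxy
  have hxy' : (x : ℕ) ≤ y := hxy
  simp only [arcT]
  split_ifs with h1 h2 h2
  · exact le_refl _
  · have e1 : (x : ℕ) = a := congrArg Fin.val h1
    have e2 : (y : ℕ) ≠ a := fun hc => h2 (Fin.ext hc)
    exact Fin.le_def.mpr (by omega)
  · have e1 : (x : ℕ) ≠ a := fun hc => h1 (Fin.ext hc)
    have e2 : (y : ℕ) = a := congrArg Fin.val h2
    exact Fin.le_def.mpr (by omega)
  · exact hxy

lemma genSg_conj_monotone {G : SimpleGraph (Fin n)} (f : Fin n ≃ Fin n)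
    (hf : ∀ a b, G.Adj a b → Monotone (arcT (f a) (f b)))
    {α : Fin n → Fin n} (hα : α ∈ genSg (arcsOf G)) :
    Monotone (⇑f ∘ α ∘ ⇑f.symm) := by
  obtain ⟨l, -, hl, rfl⟩ := hα
  have key : ∀ (l : List (Fin n × Fin n)), (∀ p ∈ l, p ∈ arcsOf G) →
      ∀ g : Fin n → Fin n, Monotone (⇑f ∘ g ∘ ⇑f.symm) →
      Monotone (⇑f ∘ (l.foldl (fun f p => arcT p.1 p.2 ∘ f) g) ∘ ⇑f.symm) := by
    intro l
    induction l with
    | nil => intro _ g hg; simpa using hg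
    | cons p t ih =>
      intro hmem g hg
      simp only [List.foldl_cons]
      refine ih (fun q hq => hmem q (List.mem_cons_of_mem _ hq)) _ ?_
      have : ⇑f ∘ (arcT p.1 p.2 ∘ g) ∘ ⇑f.symm
          = (⇑f ∘ arcT p.1 p.2 ∘ ⇑f.symm) ∘ (⇑f ∘ g ∘ ⇑f.symm) := by
        funext v; simp
      rw [this, conj_arcT]
      exact (hf p.1 p.2 (hmem p (List.mem_cons_self))).comp hg
  have := key l hl id (by simpa using monotone_id)
  simpa using this

/-- A monotone map on `Fin n` has no cycle of length `≥ 2`. -/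
lemma monotone_cycle_le_one {β : Fin n → Fin n} (hβ : Monotone β) {k : ℕ}
    (hc : IsCycleOf β k) : k ≤ 1 := by
  obtain ⟨hpos, a, ha, hcyc⟩ := hc
  by_contra hk
  push_neg at hk
  haveI : NeZero k := ⟨hpos.ne'⟩
  have hiter : ∀ (j : ℕ) (i : ZMod k), β^[j] (a i) = a (i + j) := by
    intro j
    induction j with
    | zero => simp
    | succ m ih =>
      intro i
      rw [Function.iterate_succ_apply', ih, hcyc]
      push_cast
      ring_nf
  obtain ⟨i₀, -, hmin⟩ := Finset.exists_min_image (Finset.univ : Finset (ZMod k))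
    (fun i => a i) ⟨0, Finset.mem_univ 0⟩
  have hxle : a i₀ ≤ β (a i₀) := by
    rw [hcyc i₀]; exact hmin _ (Finset.mem_univ _)
  have hmono : Monotone (fun j => β^[j] (a i₀)) := by
    apply monotone_nat_of_le_succ
    intro j
    rw [Function.iterate_succ_apply]
    exact hβ.iterate j hxle
  have hfix : β^[k] (a i₀) = a i₀ := by
    rw [hiter k i₀]
    simp [ZMod.natCast_self]
  have h1k : β (a i₀) ≤ a i₀ := by
    calc β (a i₀) = β^[1] (a i₀) := by simp
    _ ≤ β^[k] (a i₀) := hmono (by omega)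
    _ = a i₀ := hfix
  have heq : a (i₀ + 1) = a i₀ := by
    rw [← hcyc i₀]; exact le_antisymm h1k hxle
  have h10 : (1 : ZMod k) = 0 := by
    have := ha heq
    linear_combination this
  have hdvd : (k : ℕ) ∣ 1 := by
    have := (ZMod.natCast_eq_zero_iff 1 k).mp (by exact_mod_cast h10)
    exact this
  have := Nat.le_of_dvd one_pos hdvd
  omega

/-- If `G ≅ pathGraph n` then `lG G = 1`. -/
lemma lG_path {G : SimpleGraph (Fin n)} (e : G ≃g SimpleGraph.pathGraph n)
    (hedge : ∃ u v, G.Adj u v) : lG G = 1 := by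
  obtain ⟨u, v, huv⟩ := hedge
  apply lD_eq_one_of
  · exact ⟨arcT u v, arcT_mem_genSg huv, isCycleOf_one (w := v) (by simp [arcT])⟩
  · rintro k ⟨α, hα, hc⟩
    have hmono : Monotone (⇑e.toEquiv ∘ α ∘ ⇑e.toEquiv.symm) := by
      apply genSg_conj_monotone
      · intro a b hab
        exact monotone_arcT_path ((e.map_adj_iff).mpr hab)
      · exact hα
    apply monotone_cycle_le_one hmono
    obtain ⟨hpos, a, ha, hcyc⟩ := hc
    refine ⟨hpos, fun i => e.toEquiv (a i), fun i j hij => ha (e.toEquiv.injective hij), ?_⟩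
    intro i
    show e.toEquiv (α (e.toEquiv.symm (e.toEquiv (a i)))) = _
    rw [Equiv.symm_apply_apply, hcyc i]

end PathSide
section Branch

variable {n : ℕ}

/-- If some vertex has three distinct neighbours, `⟨G⟩` has an element with a 2-cycle. -/
lemma two_mem_of_branch {G : SimpleGraph (Fin n)} {c x y z : Fin n}
    (hx : G.Adj c x) (hy : G.Adj c y) (hz : G.Adj c z)
    (hxy : x ≠ y) (hxz : x ≠ z) (hyz : y ≠ z) :
    2 ∈ cycSet (arcsOf G) := by
  have hcx : c ≠ x := hx.ne
  have hcy : c ≠ y := hy.ne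
  have hcz : c ≠ z := hz.ne
  set l : List (Fin n × Fin n) := [(c,x),(y,c),(c,z),(x,c),(c,y),(z,c)] with hl
  refine ⟨l.foldl (fun f p => arcT p.1 p.2 ∘ f) id, ⟨l, by simp [hl], ?_, rfl⟩, ?_⟩
  · intro p hp
    simp only [hl, List.mem_cons, List.not_mem_nil, or_false] at hp
    rcases hp with rfl | rfl | rfl | rfl | rfl | rfl <;>
      simp [arcsOf, hx, hy, hz, hx.symm, hy.symm, hz.symm]
  · apply isCycleOf_two (p := c) (q := y) hcy
    · simp [hl, List.foldl, arcT, hcx, hcy, hcz, hxy, hxz, hyz,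
        hcx.symm, hcy.symm, hcz.symm, hxy.symm, hxz.symm, hyz.symm]
    · simp [hl, List.foldl, arcT, hcx, hcy, hcz, hxy, hxz, hyz,
        hcx.symm, hcy.symm, hcz.symm, hxy.symm, hxz.symm, hyz.symm]

end Branch
section GCycle

variable {n : ℕ}

lemma gcycle_mem {G : SimpleGraph (Fin n)} {r : ℕ} {v : ℕ → Fin n}
    (hr : 3 ≤ r) (hvr : v r = v 0)
    (hinj : ∀ i < r, ∀ j < r, v i = v j → i = j)
    (hadj : ∀ i < r, G.Adj (v i) (v (i + 1))) :
    (r - 1) ∈ cycSet (arcsOf G) := by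
  -- the prefix products
  have prefixEval : ∀ k, k ≤ r - 1 → ∀ j, j < r →
      (((List.range k).map (fun i => (v (i+1), v i))).foldl
        (fun f p => arcT p.1 p.2 ∘ f) id) (v j)
      = if 1 ≤ j ∧ j ≤ k then v (j-1) else v j := by
    intro k
    induction k with
    | zero =>
      intro _ j hj
      simp only [List.range_zero, List.map_nil, List.foldl_nil, id_eq]
      rw [if_neg (by omega)]
    | succ k ih =>
      intro hk j hj
      rw [List.range_succ, List.map_append, List.foldl_append]
      simp only [List.map_cons, List.map_nil, List.foldl_cons, List.foldl_nil]
      rw [Function.comp_apply, ih (by omega) j hj]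
      by_cases hj1 : 1 ≤ j ∧ j ≤ k
      · rw [if_pos hj1]
        have hne : v (j-1) ≠ v (k+1) := fun h => by
          have := hinj (j-1) (by omega) (k+1) (by omega) h; omega
        simp only [arcT]
        rw [if_neg hne, if_pos ⟨hj1.1, by omega⟩]
      · rw [if_neg hj1]
        by_cases hjk : j = k + 1
        · subst hjk
          have h1 : arcT (v (k+1)) (v k) (v (k+1)) = v k := by simp [arcT]
          rw [h1, if_pos (⟨by omega, le_refl _⟩ : 1 ≤ k+1 ∧ k+1 ≤ k+1)]
          norm_num
        · have hne : v j ≠ v (k+1) := fun h => hjk (hinj j hj (k+1) (by omega) h)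
          simp only [arcT]
          rw [if_neg hne, if_neg (by omega)]
  -- the full word
  set L : List (Fin n × Fin n) :=
    ((List.range (r-1)).map (fun i => (v (i+1), v i))) ++ [(v 0, v (r-1))] with hL
  set α : Fin n → Fin n := L.foldl (fun f p => arcT p.1 p.2 ∘ f) id with hα
  have hαeval : ∀ j, 2 ≤ j → j ≤ r - 1 → α (v j) = v (j - 1) := by
    intro j h2 hjr
    rw [hα, hL, List.foldl_append]
    simp only [List.foldl_cons, List.foldl_nil]
    rw [Function.comp_apply, prefixEval (r-1) (le_refl _) j (by omega),
      if_pos ⟨by omega, hjr⟩]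
    have hne : v (j-1) ≠ v 0 := fun h => by
      have := hinj (j-1) (by omega) 0 (by omega) h; omega
    simp only [arcT]
    rw [if_neg hne]
  have hαone : α (v 1) = v (r - 1) := by
    rw [hα, hL, List.foldl_append]
    simp only [List.foldl_cons, List.foldl_nil]
    rw [Function.comp_apply, prefixEval (r-1) (le_refl _) 1 (by omega),
      if_pos ⟨le_refl _, by omega⟩]
    simp [arcT]
  -- membership
  refine ⟨α, ⟨L, by simp [hL], ?_, hα⟩, ?_⟩
  · intro p hp
    rw [hL] at hp
    rcases List.mem_append.mp hp with hp | hp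
    · obtain ⟨i, hi, rfl⟩ := List.mem_map.mp hp
      rw [List.mem_range] at hi
      exact (hadj i (by omega)).symm
    · simp only [List.mem_singleton] at hp
      subst hp
      have := hadj (r-1) (by omega)
      rw [show r - 1 + 1 = r by omega, hvr] at this
      exact this.symm
  -- the (r-1)-cycle
  · haveI : NeZero (r - 1) := ⟨by omega⟩
    have hvlt : ∀ i : ZMod (r-1), i.val < r - 1 := fun i => ZMod.val_lt i
    refine ⟨by omega, fun i => if i.val = 0 then v 1 else v (r - i.val), ?_, ?_⟩
    · intro i j hij
      replace hij : (if i.val = 0 then v 1 else v (r - i.val))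
          = (if j.val = 0 then v 1 else v (r - j.val)) := hij
      have hi := hvlt i
      have hj := hvlt j
      have hval : i.val = j.val := by
        by_cases h1 : i.val = 0 <;> by_cases h2 : j.val = 0
        · omega
        · rw [if_pos h1, if_neg h2] at hij
          have := hinj 1 (by omega) (r - j.val) (by omega) hij
          omega
        · rw [if_neg h1, if_pos h2] at hij
          have := hinj (r - i.val) (by omega) 1 (by omega) hij
          omega
        · rw [if_neg h1, if_neg h2] at hij
          have := hinj (r - i.val) (by omega) (r - j.val) (by omega) hij
          omega
      have : ((i.val : ℕ) : ZMod (r-1)) = ((j.val : ℕ) : ZMod (r-1)) := by rw [hval]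
      rwa [ZMod.natCast_val, ZMod.natCast_val, ZMod.cast_id, ZMod.cast_id] at this
    · intro i
      show α (if i.val = 0 then v 1 else v (r - i.val))
          = if (i+1).val = 0 then v 1 else v (r - (i+1).val)
      have hi := hvlt i
      have hvadd : (i + 1).val = (i.val + 1) % (r - 1) := by
        rw [ZMod.val_add]
        congr 1
        haveI : Fact (1 < r - 1) := ⟨by omega⟩
        rw [ZMod.val_one]
      by_cases h0 : i.val = 0
      · rw [if_pos h0, hαone]
        have h1 : (i+1).val = 1 := by
          rw [hvadd, h0]
          exact Nat.mod_eq_of_lt (by omega)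
        rw [if_neg (by omega), h1]
      · rw [if_neg h0, hαeval (r - i.val) (by omega) (by omega)]
        by_cases hlast : i.val = r - 2
        · have h1 : (i+1).val = 0 := by
            rw [hvadd, hlast, show r - 2 + 1 = r - 1 by omega]
            exact Nat.mod_self _
          rw [if_pos h1]
          congr 1 <;> omega
        · have hv1 : (i+1).val = i.val + 1 := by
            rw [hvadd]
            exact Nat.mod_eq_of_lt (by omega)
          rw [if_neg (by omega), hv1]
          congr 1 <;> omega

end GCycle
section Classify

lemma crossing {V : Type*} {G : SimpleGraph V} (S : Set V) :
    ∀ {v w : V}, G.Walk v w → v ∈ S → w ∉ S → ∃ a ∈ S, ∃ b, b ∉ S ∧ G.Adj a b := by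
  intro v w p
  induction p with
  | nil => intro hv hw; exact absurd hv hw
  | @cons u x y h q ih =>
    intro hv hw
    by_cases hx : x ∈ S
    · exact ih hx hw
    · exact ⟨u, hv, x, hx, h⟩

variable {n : ℕ}

lemma classify {G : SimpleGraph (Fin n)} (hconn : G.Connected)
    (hedge : ∃ u v, G.Adj u v)
    (hno3 : ∀ c x y z : Fin n, G.Adj c x → G.Adj c y → G.Adj c z →
      x ≠ y → x ≠ z → y ≠ z → False)
    (hnoc : ∀ (r : ℕ) (v : ℕ → Fin n), 3 ≤ r → v r = v 0 →
      (∀ i < r, ∀ j < r, v i = v j → i = j) →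
      (∀ i < r, G.Adj (v i) (v (i + 1))) → False) :
    Nonempty (G ≃g SimpleGraph.pathGraph n) := by
  obtain ⟨u, u', huu'⟩ := hedge
  set T : Set ℕ :=
    {m | ∃ l : List (Fin n), l ≠ [] ∧ l.Nodup ∧ l.Chain' G.Adj ∧ l.length = m} with hT
  have hTne : T.Nonempty := ⟨1, [u], by simp, by simp, List.isChain_singleton _, rfl⟩
  have hTbdd : BddAbove T := by
    refine ⟨n, ?_⟩
    rintro m ⟨l, -, hnd, -, rfl⟩
    simpa using hnd.length_le_card
  obtain ⟨l, hlne, hnd, hch, hlen⟩ := Nat.sSup_mem hTne hTbdd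
  have hmax : ∀ l' : List (Fin n), l' ≠ [] → l'.Nodup → l'.Chain' G.Adj →
      l'.length ≤ l.length := by
    intro l' h1 h2 h3
    rw [hlen]
    exact le_csSup hTbdd ⟨l', h1, h2, h3, rfl⟩
  -- helpers
  have hgeq : ∀ {i j : ℕ} (hi : i < l.length) (hj : j < l.length), i = j →
      l.get ⟨i, hi⟩ = l.get ⟨j, hj⟩ := by
    intro i j hi hj h
    subst h; rfl
  have hget : ∀ {i j : ℕ} (hi : i < l.length) (hj : j < l.length),
      l.get ⟨i, hi⟩ = l.get ⟨j, hj⟩ → i = j := by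
    intro i j hi hj h
    have := hnd.get_inj_iff.mp h
    exact congrArg Fin.val this
  have hadjc : ∀ (i : ℕ) (h : i + 1 < l.length),
      G.Adj (l.get ⟨i, by omega⟩) (l.get ⟨i + 1, h⟩) := by
    intro i h
    exact List.isChain_iff_getElem.mp hch i (by omega)
  -- every vertex occurs in `l`
  have hall : ∀ w : Fin n, w ∈ l := by
    by_contra hw
    push_neg at hw
    obtain ⟨w, hwl⟩ := hw
    obtain ⟨p⟩ := hconn.preconnected (l.head hlne) w
    obtain ⟨a, ha, b, hb, hab⟩ :=
      crossing {x : Fin n | x ∈ l} p (l.head_mem hlne) hwl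
    simp only [Set.mem_setOf_eq] at ha hb
    obtain ⟨⟨i, hi⟩, rfl⟩ := List.mem_iff_get.mp ha
    rcases Nat.eq_zero_or_pos i with rfl | hi0
    · -- extend at the front
      have h0 : l.get ⟨0, hi⟩ = l.head hlne := by
        cases l with
        | nil => exact absurd rfl hlne
        | cons c t => rfl
      have hch' : (b :: l).Chain' G.Adj := by
        rw [List.Chain', List.isChain_cons]
        refine ⟨?_, hch⟩
        intro y hy
        rw [List.head?_eq_head hlne] at hy
        simp only [Option.mem_some_iff] at hy
        subst hy
        rw [← h0]
        exact hab.symm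
      have := hmax (b :: l) (by simp) (List.nodup_cons.mpr ⟨hb, hnd⟩) hch'
      simp at this
    rcases eq_or_ne i (l.length - 1) with hil | hil
    · -- extend at the back
      have hlast : l.getLast hlne = l.get ⟨i, hi⟩ := by
        subst hil
        rw [List.getLast_eq_getElem]
        rfl
      have hnd' : (l ++ [b]).Nodup := by
        rw [List.nodup_append]
        refine ⟨hnd, by simp, ?_⟩
        intro a ha c hc
        simp only [List.mem_singleton] at hc
        subst hc
        intro h
        exact hb (h ▸ ha)
      have hch' : (l ++ [b]).Chain' G.Adj := by
        rw [List.Chain', List.isChain_append]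
        refine ⟨hch, by simp, ?_⟩
        intro x hx y hy
        rw [List.getLast?_eq_getLast_of_ne_nil hlne] at hx
        simp only [Option.mem_some_iff] at hx
        simp only [List.head?_cons, Option.mem_some_iff] at hy
        subst hx; subst hy
        rw [hlast]
        exact hab
      have := hmax (l ++ [b]) (by simp) hnd' hch'
      simp at this
    · -- middle vertex has three neighbours
      have hi1 : i + 1 < l.length := by omega
      have him : i - 1 + 1 < l.length := by omega
      apply hno3 (l.get ⟨i, hi⟩) (l.get ⟨i - 1, by omega⟩) (l.get ⟨i + 1, hi1⟩) b
      · have := hadjc (i - 1) him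
        have heq : l.get ⟨i - 1 + 1, him⟩ = l.get ⟨i, hi⟩ := hgeq _ _ (by omega)
        rw [heq] at this
        exact this.symm
      · exact hadjc i hi1
      · exact hab
      · intro h
        have := hget _ _ h
        omega
      · intro h
        exact hb (h ▸ List.get_mem l _)
      · intro h
        exact hb (h ▸ List.get_mem l _)
  -- `l` enumerates all of `Fin n`
  have hlenn : l.length = n := by
    have h1 : l.length ≤ n := by simpa using hnd.length_le_card
    have h2 : n ≤ l.length := by
      have hsub : (Finset.univ : Finset (Fin n)).card ≤ l.toFinset.card :=
        Finset.card_le_card (fun x _ => List.mem_toFinset.mpr (hall x))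
      rwa [List.toFinset_card_of_nodup hnd, Finset.card_univ, Fintype.card_fin] at hsub
    omega
  have hidx : ∀ i : Fin n, (i : ℕ) < l.length := fun i => by omega
  -- the key rigidity: adjacency only between consecutive entries
  have key : ∀ (i j : ℕ) (hi : i < l.length) (hj : j < l.length), i < j →
      G.Adj (l.get ⟨i, hi⟩) (l.get ⟨j, hj⟩) → j = i + 1 := by
    intro i j hi hj hij hadj2
    by_contra hne
    rcases Nat.eq_zero_or_pos i with rfl | hi0
    · -- i = 0
      rcases eq_or_ne j (l.length - 1) with hjl | hjl
      · -- a genuine cycle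
        have hr3 : 3 ≤ l.length := by omega
        refine hnoc l.length (fun t => l.get ⟨t % l.length, Nat.mod_lt _ (by omega)⟩)
          hr3 ?_ ?_ ?_
        · exact hgeq _ _ (by simp)
        · intro s hs t ht h
          have := hget _ _ h
          rwa [Nat.mod_eq_of_lt hs, Nat.mod_eq_of_lt ht] at this
        · intro t ht
          rcases eq_or_ne t (l.length - 1) with rfl | htl
          · convert hadj2.symm using 3
            · rw [Nat.mod_eq_of_lt (by omega)]; omega
            · rw [show l.length - 1 + 1 = l.length by omega, Nat.mod_self]
          · convert hadjc t (by omega) using 3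
            · exact Nat.mod_eq_of_lt (by omega)
            · exact Nat.mod_eq_of_lt (by omega)
      · -- branch at j
        have hj2 : 2 ≤ j := by omega
        have hj1 : j + 1 < l.length := by omega
        have hjm : j - 1 + 1 < l.length := by omega
        apply hno3 (l.get ⟨j, hj⟩) (l.get ⟨j - 1, by omega⟩) (l.get ⟨j + 1, hj1⟩)
          (l.get ⟨0, hi⟩)
        · have := hadjc (j - 1) hjm
          have heq : l.get ⟨j - 1 + 1, hjm⟩ = l.get ⟨j, hj⟩ := hgeq _ _ (by omega)
          rw [heq] at this
          exact this.symm
        · exact hadjc j hj1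
        · exact hadj2.symm
        · intro h; have := hget _ _ h; omega
        · intro h; have := hget _ _ h; omega
        · intro h; have := hget _ _ h; omega
    · -- branch at i
      have hi1 : i + 1 < l.length := by omega
      have him : i - 1 + 1 < l.length := by omega
      apply hno3 (l.get ⟨i, hi⟩) (l.get ⟨i - 1, by omega⟩) (l.get ⟨i + 1, hi1⟩)
        (l.get ⟨j, hj⟩)
      · have := hadjc (i - 1) him
        have heq : l.get ⟨i - 1 + 1, him⟩ = l.get ⟨i, hi⟩ := hgeq _ _ (by omega)
        rw [heq] at this
        exact this.symm
      · exact hadjc i hi1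
      · exact hadj2
      · intro h; have := hget _ _ h; omega
      · intro h; have := hget _ _ h; omega
      · intro h; have := hget _ _ h; omega
  -- build the isomorphism
  have hbij : Function.Bijective (fun i : Fin n => l.get ⟨(i : ℕ), hidx i⟩) := by
    rw [← Finite.injective_iff_bijective]
    intro i j h
    exact Fin.ext (hget _ _ h)
  refine ⟨(SimpleGraph.Iso.symm ⟨Equiv.ofBijective _ hbij, ?_⟩)⟩
  intro i j
  show G.Adj (l.get ⟨(i : ℕ), hidx i⟩) (l.get ⟨(j : ℕ), hidx j⟩) ↔
    (SimpleGraph.pathGraph n).Adj i j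
  rw [SimpleGraph.pathGraph_adj]
  constructor
  · intro h
    rcases lt_trichotomy (i : ℕ) (j : ℕ) with hij | hij | hij
    · left
      have := key _ _ _ _ hij h
      omega
    · exact absurd (hgeq _ _ hij) h.ne
    · right
      have := key _ _ _ _ hij h.symm
      omega
  · rintro (h | h)
    · have := hadjc (i : ℕ) (by omega)
      have heq : l.get ⟨(i : ℕ) + 1, by omega⟩ = l.get ⟨(j : ℕ), hidx j⟩ :=
        hgeq _ _ (by omega)
      rwa [heq] at this
    · have := hadjc (j : ℕ) (by omega)
      have heq : l.get ⟨(j : ℕ) + 1, by omega⟩ = l.get ⟨(i : ℕ), hidx i⟩ :=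
        hgeq _ _ (by omega)
      rw [heq] at this
      exact this.symm

end Classify
/-- A connected graph with an edge satisfies `l(G) = 1` iff it is a
path graph. -/
theorem stmt7 (n : ℕ) (G : SimpleGraph (Fin n)) (hconn : G.Connected)
    (hedge : ∃ u v, G.Adj u v) :
    lG G = 1 ↔ ∃ m : ℕ, Nonempty (G ≃g SimpleGraph.pathGraph m) := by
  constructor
  · intro h1
    have hle : ∀ k ∈ cycSet (arcsOf G), k ≤ 1 := by
      intro k hk
      have := le_lD hk
      rwa [show lD (arcsOf G) = lG G from rfl, h1] at this
    obtain ⟨e⟩ := classify hconn hedge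
      (fun c x y z hx hy hz hxy hxz hyz => by
        have := hle 2 (two_mem_of_branch hx hy hz hxy hxz hyz)
        omega)
      (fun r v hr hvr hinj hadjv => by
        have := hle (r - 1) (gcycle_mem hr hvr hinj hadjv)
        omega)
    exact ⟨n, ⟨e⟩⟩
  · rintro ⟨m, ⟨e⟩⟩
    have hnm : n = m := by simpa using Fintype.card_congr e.toEquiv
    subst hnm
    exact lG_path e hedge
end

section
/- Let D be a digraph. If D contains a cycle and (a,b) is an arc belonging to that cycle, then the transformation (b→a) belongs to ⟨D⟩, and (a→b) and (b→a) are R-related in ⟨D⟩. -/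
lemma myfoldl_comp {n : ℕ} (l : List (Fin n × Fin n)) (h : Fin n → Fin n) :
    l.foldl (fun f p => arcT p.1 p.2 ∘ f) h
      = (l.foldl (fun f p => arcT p.1 p.2 ∘ f) id) ∘ h := by
  induction l generalizing h with
  | nil => rfl
  | cons q l ih =>
    simp only [List.foldl_cons]
    rw [ih, ih (arcT q.1 q.2 ∘ id)]
    rfl

lemma genSg_mul_mem {n : ℕ} {D : Set (Fin n × Fin n)} {x y : Fin n → Fin n}
    (hx : x ∈ genSg D) (hy : y ∈ genSg D) : sgMul x y ∈ genSg D := by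
  obtain ⟨l1, h1ne, h1D, h1⟩ := hx
  obtain ⟨l2, h2ne, h2D, h2⟩ := hy
  refine ⟨l1 ++ l2, by simp [h1ne], ?_, ?_⟩
  · intro p hp
    rcases List.mem_append.mp hp with h | h
    exacts [h1D p h, h2D p h]
  · rw [List.foldl_append, ← h1, myfoldl_comp, ← h2]
    rfl

lemma shift_spec {n : ℕ} (p : ℕ → Fin n) : ∀ t : ℕ,
    (∀ i, i ≤ t → ∀ j, j ≤ t → p i = p j → i = j) →
    (∀ j, j < t →
      ((List.range t).map (fun j => (p (t-1-j), p (t-j)))).foldl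
        (fun f q => arcT q.1 q.2 ∘ f) id (p j) = p (j+1)) ∧
    (∀ x : Fin n, (∀ j, j < t → x ≠ p j) →
      ((List.range t).map (fun j => (p (t-1-j), p (t-j)))).foldl
        (fun f q => arcT q.1 q.2 ∘ f) id x = x) := by
  intro t
  induction t with
  | zero => exact fun _ => ⟨fun j hj => absurd hj (by omega), fun x _ => rfl⟩
  | succ t ih =>
    intro hinj
    have hinj' : ∀ i, i ≤ t → ∀ j, j ≤ t → p i = p j → i = j :=
      fun i hi j hj h => hinj i (by omega) j (by omega) h
    obtain ⟨ih1, ih2⟩ := ih hinj'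
    have hfun : ((fun j => (p (t+1-1-j), p (t+1-j))) ∘ Nat.succ)
        = fun j => (p (t-1-j), p (t-j)) := by
      funext j
      simp only [Function.comp]
      have e1 : t + 1 - 1 - (j + 1) = t - 1 - j := by omega
      have e2 : t + 1 - (j + 1) = t - j := by omega
      rw [show Nat.succ j = j + 1 from rfl, e1, e2]
    have hlist : (List.range (t+1)).map (fun j => (p (t+1-1-j), p (t+1-j)))
        = (p t, p (t+1)) :: (List.range t).map (fun j => (p (t-1-j), p (t-j))) := by
      rw [List.range_succ_eq_map, List.map_cons, List.map_map, hfun]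
      norm_num
    rw [hlist]
    constructor
    · intro j hj
      rw [List.foldl_cons, myfoldl_comp]
      by_cases hjt : j = t
      · rw [hjt]
        have h1 : arcT (p t) (p (t+1)) (p t) = p (t+1) := by simp [arcT]
        show (_ ∘ (arcT (p t) (p (t+1)) ∘ id)) (p t) = _
        simp only [Function.comp, id]
        rw [h1]
        exact ih2 (p (t+1)) (fun j' hj' h => by
          have := hinj (t+1) le_rfl j' (by omega) h; omega)
      · have hlt : j < t := by omega
        have h1 : arcT (p t) (p (t+1)) (p j) = p j := by
          have : p j ≠ p t := fun h => hjt (hinj j (by omega) t (by omega) h)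
          simp [arcT, this]
        show (_ ∘ (arcT (p t) (p (t+1)) ∘ id)) (p j) = _
        simp only [Function.comp, id]
        rw [h1]
        exact ih1 j hlt
    · intro x hx
      rw [List.foldl_cons, myfoldl_comp]
      have h1 : arcT (p t) (p (t+1)) x = x := by
        have : x ≠ p t := hx t (by omega)
        simp [arcT, this]
      show (_ ∘ (arcT (p t) (p (t+1)) ∘ id)) x = x
      simp only [Function.comp, id]
      rw [h1]
      exact ih2 x (fun j hj => hx j (by omega))

/-- If the arc `(a,b)` lies on a cycle of `D`, then `(b→a) ∈ ⟨D⟩` and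
`(a→b)` and `(b→a)` are `R`-related in `⟨D⟩`. -/
theorem stmt10 (n : ℕ) (D : Set (Fin n × Fin n)) (hloop : ∀ u : Fin n, (u, u) ∉ D)
    (a b : Fin n) (r : ℕ) (v : ℕ → Fin n) (hcyc : IsDCycle D r v)
    (hab : ∃ i < r, v i = a ∧ v (i + 1) = b) :
    arcT b a ∈ genSg D ∧ RRel (genSg D) (arcT a b) (arcT b a) := by
  obtain ⟨hr1, hvr, hvinj, hvarc⟩ := hcyc
  obtain ⟨i, hir, hvia, hvib⟩ := hab
  have hrpos : 0 < r := hr1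
  have habD : (a, b) ∈ D := by have := hvarc i hir; rwa [hvia, hvib] at this
  have hne : a ≠ b := by
    intro h
    exact hloop a (by rwa [← h] at habD)
  have hr2 : 2 ≤ r := by
    by_contra h
    have hr : r = 1 := by omega
    subst hr
    have h01 : v 1 = v 0 := hvr
    have := hvarc 0 (by omega)
    rw [h01] at this
    exact hloop (v 0) this
  set m := r - 1 with hm
  have hm1 : 1 ≤ m := by omega
  set u : ℕ → Fin n := fun j => v ((i + 1 + j) % r) with hu_def
  have hu0 : u 0 = b := by
    rw [hu_def]
    simp only [Nat.add_zero]
    rcases Nat.lt_or_ge (i + 1) r with h | h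
    · rw [Nat.mod_eq_of_lt h]; exact hvib
    · have he : i + 1 = r := by omega
      rw [he, Nat.mod_self, ← hvr, ← he]; exact hvib
  have hum : u m = a := by
    rw [hu_def]
    simp only []
    rw [show i + 1 + m = i + r by omega, Nat.add_mod_right, Nat.mod_eq_of_lt hir]
    exact hvia
  have huinj : ∀ i' j', i' < r → j' < r → u i' = u j' → i' = j' := by
    intro i' j' h1 h2 h
    rw [hu_def] at h
    simp only [] at h
    have hmod : (i + 1 + i') % r = (i + 1 + j') % r :=
      hvinj _ (Nat.mod_lt _ hrpos) _ (Nat.mod_lt _ hrpos) h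
    have h3 : i' ≡ j' [MOD r] := Nat.ModEq.add_left_cancel' (i + 1) hmod
    have h4 : i' % r = j' % r := h3
    rwa [Nat.mod_eq_of_lt h1, Nat.mod_eq_of_lt h2] at h4
  have harc : ∀ j, (u j, u (j + 1)) ∈ D := by
    intro j
    have hkr : (i + 1 + j) % r < r := Nat.mod_lt _ hrpos
    have hsucc : (i + 1 + (j + 1)) % r = ((i + 1 + j) % r + 1) % r := by
      rw [show i + 1 + (j + 1) = (i + 1 + j) + 1 by omega, Nat.add_mod (i + 1 + j) 1 r,
        Nat.mod_eq_of_lt (show 1 < r by omega)]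
    by_cases hk1 : (i + 1 + j) % r + 1 < r
    · have h2 : u (j + 1) = v ((i + 1 + j) % r + 1) := by
        rw [hu_def]; simp only []; rw [hsucc, Nat.mod_eq_of_lt hk1]
      have h1 : u j = v ((i + 1 + j) % r) := by rw [hu_def]
      rw [h1, h2]
      exact hvarc _ hkr
    · have hkr1 : (i + 1 + j) % r + 1 = r := by omega
      have h2 : u (j + 1) = v 0 := by
        rw [hu_def]; simp only []; rw [hsucc, hkr1, Nat.mod_self]
      have h1 : u j = v ((i + 1 + j) % r) := by rw [hu_def]
      rw [h1, h2, show (v 0 : Fin n) = v ((i + 1 + j) % r + 1) by rw [hkr1]; exact hvr.symm]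
      exact hvarc _ hkr
  -- the shift list and its fold
  set SL : List (Fin n × Fin n) := (List.range m).map (fun j => (u (m - 1 - j), u (m - j)))
    with hSL
  set SF : Fin n → Fin n := SL.foldl (fun f q => arcT q.1 q.2 ∘ f) id with hSF
  obtain ⟨hsh1, hsh2⟩ := shift_spec u m
    (fun i' hi' j' hj' h => huinj i' j' (by omega) (by omega) h)
  -- the full list and the map T
  set TL : List (Fin n × Fin n) := (a, b) :: SL with hTL
  set T : Fin n → Fin n := TL.foldl (fun f q => arcT q.1 q.2 ∘ f) id with hT
  have hTx : ∀ x, T x = SF (arcT a b x) := by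
    intro x
    rw [hT, hTL, List.foldl_cons, myfoldl_comp]
    rfl
  have hTmem : T ∈ genSg D := by
    refine ⟨TL, by simp [hTL], ?_, hT⟩
    intro p hp
    rw [hTL] at hp
    rcases List.mem_cons.mp hp with h | h
    · rwa [h]
    · rw [hSL] at h
      obtain ⟨j, hj, hpj⟩ := List.mem_map.mp h
      have hjm : j < m := List.mem_range.mp hj
      rw [← hpj, show m - j = (m - 1 - j) + 1 by omega]
      exact harc _
  -- pointwise action of T
  have hTa : T a = u 1 := by
    rw [hTx, show arcT a b a = b by simp [arcT], ← hu0]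
    exact hsh1 0 (by omega)
  have hTs : ∀ s, 1 ≤ s → s < m → T (u s) = u (s + 1) := by
    intro s h1 h2
    rw [hTx]
    have hne' : u s ≠ a := by
      rw [← hum]; intro h
      have := huinj s m (by omega) (by omega) h; omega
    rw [show arcT a b (u s) = u s by simp [arcT, hne']]
    exact hsh1 s h2
  have hTb : T b = u 1 := by
    rw [hTx, show arcT a b b = b by simp [arcT], ← hu0]
    exact hsh1 0 (by omega)
  have hTfix : ∀ x, (∀ j, j < r → x ≠ u j) → T x = x := by
    intro x hx
    rw [hTx]
    have hne' : x ≠ a := by rw [← hum]; exact hx m (by omega)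
    rw [show arcT a b x = x by simp [arcT, hne']]
    exact hsh2 x (fun j hj => hx j (by omega))
  -- the auxiliary enumeration w and iterates of T
  set w : ℕ → Fin n := fun s => u ((s - 1) % m + 1) with hw
  have hws : ∀ s, 1 ≤ s → s ≤ m → w s = u s := by
    intro s h1 h2
    rw [hw]
    simp only []
    rw [Nat.mod_eq_of_lt (by omega)]
    congr 1
    omega
  have hTw : ∀ s, 1 ≤ s → T (w s) = w (s + 1) := by
    intro s h1
    have hq : (s - 1) % m < m := Nat.mod_lt _ (by omega)
    by_cases hc : (s - 1) % m + 1 < m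
    · have hstep : T (w s) = u ((s - 1) % m + 1 + 1) := by
        rw [hw]; exact hTs _ (by omega) hc
      rw [hstep, hw]
      simp only []
      congr 1
      have he : (s + 1 - 1) % m = (s - 1) % m + 1 := by
        rw [show s + 1 - 1 = (s - 1) + 1 by omega, Nat.add_mod,
          Nat.mod_eq_of_lt (show 1 < m by omega), Nat.mod_eq_of_lt hc]
      omega
    · have he : (s - 1) % m + 1 = m := by omega
      have hstep : T (w s) = u 1 := by
        rw [hw]; simp only []; rw [he, hum]; exact hTa
      rw [hstep, hw]
      simp only []
      have he2 : (s + 1 - 1) % m = 0 := by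
        rw [show s + 1 - 1 = (s - 1) + 1 by omega, Nat.add_mod,
          show (s - 1) % m = m - 1 by omega]
        by_cases hm2 : m = 1
        · rw [hm2]
        · rw [Nat.mod_eq_of_lt (show 1 < m by omega), show m - 1 + 1 = m by omega,
            Nat.mod_self]
      rw [he2]
  have hIter : ∀ k s, 1 ≤ s → T^[k] (w s) = w (s + k) := by
    intro k
    induction k with
    | zero => intro s h; simp
    | succ k ih =>
      intro s h
      rw [Function.iterate_succ_apply, hTw s h, ih (s + 1) (by omega)]
      congr 1
      omega
  have hfixIter : ∀ k x, (∀ j, j < r → x ≠ u j) → T^[k] x = x := by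
    intro k x hx
    induction k with
    | zero => simp
    | succ k ih => rw [Function.iterate_succ_apply, hTfix x hx, ih]
  have hTm : T^[m] = arcT b a := by
    funext x
    by_cases hxb : x = b
    · rw [hxb]
      have h1 : T^[m] b = w (1 + (m - 1)) := by
        conv_lhs => rw [show m = (m - 1) + 1 by omega]
        rw [Function.iterate_succ_apply, hTb, ← hws 1 le_rfl hm1]
        exact hIter (m - 1) 1 le_rfl
      have h2 : w (1 + (m - 1)) = a := by
        rw [show 1 + (m - 1) = m by omega, hws m hm1 le_rfl]
        exact hum
      rw [h1, h2]
      simp [arcT]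
    · by_cases hxu : ∃ j, j < r ∧ x = u j
      · obtain ⟨j, hj, hxj⟩ := hxu
        have hj1 : 1 ≤ j := by
          rcases Nat.eq_zero_or_pos j with h | h
          · exact absurd (by rw [hxj, h, hu0]) hxb
          · exact h
        have hjm : j ≤ m := by omega
        subst hxj
        rw [← hws j hj1 hjm, hIter m j hj1]
        have h2 : w (j + m) = w j := by
          rw [hw]
          simp only []
          rw [show j + m - 1 = (j - 1) + m by omega, Nat.add_mod_right]
        rw [h2, hws j hj1 hjm]
        have hne' : u j ≠ b := by
          rw [← hu0]; intro h
          have := huinj j 0 hj hrpos h; omega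
        simp [arcT, hne']
      · push_neg at hxu
        rw [hfixIter m x (fun j hj h => hxu j hj h)]
        simp [arcT, hxb]
  have hbamem : arcT b a ∈ genSg D := by
    rw [← hTm]
    have hpow : ∀ k, T^[k + 1] ∈ genSg D := by
      intro k
      induction k with
      | zero => simpa using hTmem
      | succ k ih =>
        have he : T^[k + 1 + 1] = sgMul (T^[k + 1]) T := by
          rw [Function.iterate_succ']
          rfl
        rw [he]
        exact genSg_mul_mem ih hTmem
    rw [show m = (m - 1) + 1 by omega]
    exact hpow (m - 1)
  have habmem : arcT a b ∈ genSg D := by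
    refine ⟨[(a, b)], by simp, by simp [habD], ?_⟩
    rfl
  refine ⟨hbamem, ?_⟩
  have hAB : sgMul (arcT a b) (arcT b a) = arcT b a := by
    funext x
    simp only [sgMul, Function.comp, arcT]
    by_cases h1 : x = a
    · subst h1; simp [hne, Ne.symm hne]
    · by_cases h2 : x = b <;> simp [h1, h2, hne, Ne.symm hne]
  have hBA : sgMul (arcT b a) (arcT a b) = arcT a b := by
    funext x
    simp only [sgMul, Function.comp, arcT]
    by_cases h1 : x = a
    · subst h1; simp [hne, Ne.symm hne]
    · by_cases h2 : x = b <;> simp [h1, h2, hne, Ne.symm hne]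
  have hassoc : ∀ x y z : Fin n → Fin n, sgMul (sgMul x y) z = sgMul x (sgMul y z) :=
    fun _ _ _ => rfl
  show rIdeal (genSg D) (arcT a b) = rIdeal (genSg D) (arcT b a)
  apply Set.Subset.antisymm
  · intro z hz
    rcases Set.mem_insert_iff.mp hz with rfl | ⟨s, hs, rfl⟩
    · exact Set.mem_insert_iff.mpr (Or.inr ⟨arcT a b, habmem, hBA.symm⟩)
    · exact Set.mem_insert_iff.mpr
        (Or.inr ⟨sgMul (arcT a b) s, genSg_mul_mem habmem hs, by rw [← hassoc, hBA]⟩)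
  · intro z hz
    rcases Set.mem_insert_iff.mp hz with rfl | ⟨s, hs, rfl⟩
    · exact Set.mem_insert_iff.mpr (Or.inr ⟨arcT b a, hbamem, hAB.symm⟩)
    · exact Set.mem_insert_iff.mpr
        (Or.inr ⟨sgMul (arcT b a) s, genSg_mul_mem hbamem hs, by rw [← hassoc, hAB]⟩)
end

section
/- Let D be a digraph with at least one arc. Then ⟨D⟩ is R-trivial if and only if D is acyclic. -/
section Helpers

variable {n : ℕ}

lemma foldl_eq_comp (l : List (Fin n × Fin n)) (g : Fin n → Fin n) :
    l.foldl (fun f p => arcT p.1 p.2 ∘ f) g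
      = (l.foldl (fun f p => arcT p.1 p.2 ∘ f) id) ∘ g := by
  induction l generalizing g with
  | nil => simp
  | cons p l ih =>
    simp only [List.foldl_cons]
    rw [ih (arcT p.1 p.2 ∘ g), ih (arcT p.1 p.2 ∘ id)]
    rfl

lemma genSg_mul {D : Set (Fin n × Fin n)} {x y : Fin n → Fin n}
    (hx : x ∈ genSg D) (hy : y ∈ genSg D) : sgMul x y ∈ genSg D := by
  obtain ⟨l1, hl1ne, hl1D, hl1⟩ := hx
  obtain ⟨l2, hl2ne, hl2D, hl2⟩ := hy
  refine ⟨l1 ++ l2, by simp [hl1ne], ?_, ?_⟩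
  · intro p hp
    rcases List.mem_append.1 hp with h | h
    · exact hl1D p h
    · exact hl2D p h
  · rw [List.foldl_append, ← hl1, foldl_eq_comp, ← hl2]
    rfl

lemma rRel_of_mul {D : Set (Fin n × Fin n)} {x y s t : Fin n → Fin n}
    (hs : s ∈ genSg D) (ht : t ∈ genSg D)
    (hxy : y = sgMul x s) (hyx : x = sgMul y t) : RRel (genSg D) x y := by
  unfold RRel rIdeal
  ext z
  simp only [Set.mem_insert_iff, Set.mem_setOf_eq]
  constructor
  · rintro (rfl | ⟨u, hu, rfl⟩)
    · exact Or.inr ⟨t, ht, hyx⟩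
    · exact Or.inr ⟨sgMul t u, genSg_mul ht hu, by rw [hyx]; rfl⟩
  · rintro (rfl | ⟨u, hu, rfl⟩)
    · exact Or.inr ⟨s, hs, hxy⟩
    · exact Or.inr ⟨sgMul s u, genSg_mul hs hu, by rw [hxy]; rfl⟩

/-- The product of the arcs `(v 0, v 1), …, (v (m-1), v m)`. -/
def pathT (v : ℕ → Fin n) (m : ℕ) : Fin n → Fin n :=
  ((List.range m).map (fun i => (v i, v (i + 1)))).foldl (fun f p => arcT p.1 p.2 ∘ f) id

lemma pathT_succ (v : ℕ → Fin n) (m : ℕ) :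
    pathT v (m + 1) = arcT (v m) (v (m + 1)) ∘ pathT v m := by
  unfold pathT
  rw [List.range_succ, List.map_append, List.foldl_append]
  rfl

lemma pathT_mem {D : Set (Fin n × Fin n)} {r : ℕ} {v : ℕ → Fin n}
    (harc : ∀ i < r, (v i, v (i + 1)) ∈ D) (m : ℕ) (hm1 : 1 ≤ m) (hmr : m ≤ r) :
    pathT v m ∈ genSg D := by
  refine ⟨(List.range m).map (fun i => (v i, v (i + 1))), ?_, ?_, rfl⟩
  · simp only [ne_eq, List.map_eq_nil_iff, List.range_eq_nil]
    omega
  · intro p hp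
    simp only [List.mem_map, List.mem_range] at hp
    obtain ⟨i, hi, rfl⟩ := hp
    exact harc i (lt_of_lt_of_le hi hmr)

lemma pathT_spec {r : ℕ} {v : ℕ → Fin n}
    (hinj : ∀ i < r, ∀ j < r, v i = v j → i = j) :
    ∀ m ≤ r, (∀ i < m, pathT v m (v i) = v m) ∧
      (∀ u : Fin n, (∀ i < m, u ≠ v i) → pathT v m u = u) := by
  intro m
  induction m with
  | zero => exact fun _ => ⟨fun i hi => absurd hi (Nat.not_lt_zero i), fun u _ => rfl⟩
  | succ m ih =>
    intro hm
    obtain ⟨ha, hb⟩ := ih (Nat.le_of_succ_le hm)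
    have hmr : m < r := hm
    constructor
    · intro i hi
      rcases Nat.lt_succ_iff_lt_or_eq.1 hi with h | rfl
      · rw [pathT_succ, Function.comp_apply, ha i h, arcT, if_pos rfl]
      · have hfix : pathT v i (v i) = v i := by
          apply hb
          intro j hj hne
          exact absurd (hinj i hmr j (lt_trans hj hmr) hne) (Nat.ne_of_gt hj)
        rw [pathT_succ, Function.comp_apply, hfix, arcT, if_pos rfl]
    · intro u hu
      have h1 : pathT v m u = u := hb u (fun i hi => hu i (Nat.lt_succ_of_lt hi))
      rw [pathT_succ, Function.comp_apply, h1, arcT, if_neg (hu m (Nat.lt_succ_self m))]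

lemma not_rtrivial_of_cycle {D : Set (Fin n × Fin n)} (hcyc : HasDCycle D)
    (hloop : ∀ u : Fin n, (u, u) ∉ D) : ¬ RTrivial (genSg D) := by
  obtain ⟨r, v, hr1, hvr, hinj, harc⟩ := hcyc
  have hr2 : 2 ≤ r := by
    by_contra h
    have hr : r = 1 := by omega
    subst hr
    have := harc 0 (by norm_num)
    rw [show (0 : ℕ) + 1 = 1 from rfl, show v 1 = v 0 from hvr] at this
    exact hloop (v 0) this
  have hrm1 : r - 1 + 1 = r := by omega
  obtain ⟨hA, hB⟩ := pathT_spec hinj (r - 1) (by omega)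
  obtain ⟨hA', hB'⟩ := pathT_spec hinj r le_rfl
  have hx : pathT v (r - 1) ∈ genSg D := pathT_mem harc (r - 1) (by omega) (by omega)
  have hy : pathT v r ∈ genSg D := pathT_mem harc r (by omega) le_rfl
  have hεmem : arcT (v (r - 1)) (v r) ∈ genSg D := by
    refine ⟨[(v (r - 1), v r)], by simp, ?_, ?_⟩
    · intro p hp
      simp only [List.mem_singleton] at hp
      subst hp
      have := harc (r - 1) (by omega)
      rwa [hrm1] at this
    · simp only [List.foldl_cons, List.foldl_nil, Function.comp_id]
  have hy_eq : pathT v r = sgMul (pathT v (r - 1)) (arcT (v (r - 1)) (v r)) := by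
    have := pathT_succ v (r - 1)
    rw [hrm1] at this
    exact this
  have hx_eq : pathT v (r - 1) = sgMul (pathT v r) (pathT v (r - 1)) := by
    funext u
    show pathT v (r - 1) u = pathT v (r - 1) (pathT v r u)
    by_cases hu : ∀ i < r, u ≠ v i
    · rw [hB' u hu]
    · push_neg at hu
      obtain ⟨i, hi, rfl⟩ := hu
      have hyv : pathT v r (v i) = v 0 := by
        rw [hA' i hi]; exact hvr
      rw [hyv]
      have hx0 : pathT v (r - 1) (v 0) = v (r - 1) := hA 0 (by omega)
      rw [hx0]
      by_cases hir : i < r - 1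
      · exact hA i hir
      · have hieq : i = r - 1 := by omega
        subst hieq
        apply hB
        intro j hj hne
        exact absurd (hinj (r - 1) (by omega) j (by omega) hne) (by omega)
  intro hRT
  have hxy := hRT (pathT v (r - 1)) hx (pathT v r) hy
    (rRel_of_mul hεmem hx hy_eq hx_eq)
  have h1 : pathT v (r - 1) (v 0) = v (r - 1) := hA 0 (by omega)
  have h2 : pathT v r (v 0) = v 0 := by rw [hA' 0 (by omega)]; exact hvr
  rw [hxy, h2] at h1
  have := hinj 0 (by omega) (r - 1) (by omega) h1
  omega

lemma closedWalk_hasDCycle {D : Set (Fin n × Fin n)} :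
    ∀ r, 1 ≤ r → ∀ v : ℕ → Fin n, v r = v 0 → (∀ i < r, (v i, v (i + 1)) ∈ D) →
      HasDCycle D := by
  intro r
  induction r using Nat.strong_induction_on with
  | _ r ih =>
    intro hr1 v hvr harc
    by_cases hinj : ∀ i < r, ∀ j < r, v i = v j → i = j
    · exact ⟨r, v, hr1, hvr, hinj, harc⟩
    · push_neg at hinj
      obtain ⟨i, hi, j, hj, heq, hne⟩ := hinj
      have key : ∀ a b, a < b → b < r → v a = v b → HasDCycle D := by
        intro a b hab hbr heq'
        refine ih (b - a) (by omega) (by omega) (fun k => v (a + k)) ?_ ?_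
        · show v (a + (b - a)) = v (a + 0)
          have h1 : a + (b - a) = b := by omega
          have h2 : a + 0 = a := by omega
          rw [h1, h2]
          exact heq'.symm
        · intro k hk
          show (v (a + k), v (a + (k + 1))) ∈ D
          have h1 : a + (k + 1) = a + k + 1 := by omega
          rw [h1]
          exact harc (a + k) (by omega)
      rcases Nat.lt_or_ge i j with hij | hij
      · exact key i j hij hj heq
      · exact key j i (by omega) hi heq.symm

lemma transGen_walk {D : Set (Fin n × Fin n)} {a b : Fin n}
    (h : Relation.TransGen (fun a b => (a, b) ∈ D) a b) :
    ∃ (r : ℕ) (v : ℕ → Fin n), 1 ≤ r ∧ v 0 = a ∧ v r = b ∧ ∀ i < r, (v i, v (i + 1)) ∈ D := by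
  induction h with
  | @single c hac =>
    refine ⟨1, fun k => if k = 0 then a else c, le_rfl, rfl, rfl, ?_⟩
    intro i hi
    have : i = 0 := by omega
    subst this
    simpa using hac
  | @tail b c hab hbc ih =>
    obtain ⟨r, v, hr1, hv0, hvr, harc⟩ := ih
    refine ⟨r + 1, fun k => if k ≤ r then v k else c, by omega, ?_, ?_, ?_⟩
    · simp [hv0]
    · simp
    · intro i hi
      by_cases h : i < r
      · simp only [if_pos (by omega : i ≤ r), if_pos (by omega : i + 1 ≤ r)]
        exact harc i h
      · have : i = r := by omega
        subst this
        simp only [if_pos (le_refl i), if_neg (by omega : ¬ i + 1 ≤ i)]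
        rw [hvr]
        exact hbc

lemma no_transGen_loop {D : Set (Fin n × Fin n)} (hD : DAcyclic D) (a : Fin n) :
    ¬ Relation.TransGen (fun a b => (a, b) ∈ D) a a := by
  intro h
  obtain ⟨r, v, hr1, hv0, hvr, harc⟩ := transGen_walk h
  exact hD (closedWalk_hasDCycle r hr1 v (by rw [hv0, hvr]) harc)

/-- The number of vertices reachable from `a`. -/
noncomputable def rmeas (D : Set (Fin n × Fin n)) (a : Fin n) : ℕ :=
  {u | dreach D a u}.ncard

lemma rmeas_lt {D : Set (Fin n × Fin n)} (hD : DAcyclic D) {a b : Fin n}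
    (hab : (a, b) ∈ D) : rmeas D b < rmeas D a := by
  apply Set.ncard_lt_ncard ?_ (Set.toFinite _)
  constructor
  · intro u hu
    exact Relation.ReflTransGen.head hab hu
  · intro hsub
    have ha : a ∈ {u | dreach D a u} := Relation.ReflTransGen.refl
    have hba : dreach D b a := hsub ha
    exact no_transGen_loop hD a (Relation.TransGen.head' hab hba)

lemma foldl_dec {D : Set (Fin n × Fin n)} (hD : DAcyclic D) :
    ∀ l : List (Fin n × Fin n), (∀ p ∈ l, p ∈ D) →
    ∀ g : Fin n → Fin n, (∀ w, g w = w ∨ rmeas D (g w) < rmeas D w) →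
    ∀ w, (l.foldl (fun f p => arcT p.1 p.2 ∘ f) g) w = w ∨
      rmeas D ((l.foldl (fun f p => arcT p.1 p.2 ∘ f) g) w) < rmeas D w := by
  intro l
  induction l with
  | nil => exact fun _ g hg w => hg w
  | cons p l ih =>
    intro hl g hg w
    simp only [List.foldl_cons]
    apply ih (fun q hq => hl q (List.mem_cons_of_mem p hq))
    intro w'
    have hpD : (p.1, p.2) ∈ D := hl p List.mem_cons_self
    rcases hg w' with h | h
    · by_cases hw : g w' = p.1
      · right
        have : (arcT p.1 p.2 ∘ g) w' = p.2 := by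
          simp [arcT, hw]
        rw [this, ← h, hw]
        exact rmeas_lt hD hpD
      · left
        simp only [Function.comp_apply, arcT, if_neg hw]
        exact h
    · right
      by_cases hw : g w' = p.1
      · have : (arcT p.1 p.2 ∘ g) w' = p.2 := by
          simp [arcT, hw]
        rw [this]
        calc rmeas D p.2 < rmeas D p.1 := rmeas_lt hD hpD
          _ = rmeas D (g w') := by rw [hw]
          _ < rmeas D w' := h
      · have : (arcT p.1 p.2 ∘ g) w' = g w' := by
          simp [arcT, hw]
        rw [this]
        exact h

lemma gen_dec {D : Set (Fin n × Fin n)} (hD : DAcyclic D) {α : Fin n → Fin n}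
    (hα : α ∈ genSg D) : ∀ w, α w = w ∨ rmeas D (α w) < rmeas D w := by
  obtain ⟨l, -, hlD, rfl⟩ := hα
  exact foldl_dec hD l hlD id (fun w => Or.inl rfl)

lemma rtrivial_of_acyclic {D : Set (Fin n × Fin n)} (hD : DAcyclic D) :
    RTrivial (genSg D) := by
  intro x hx y hy hR
  have hymem : y = x ∨ ∃ s ∈ genSg D, y = sgMul x s := by
    have : y ∈ rIdeal (genSg D) x := hR ▸ Set.mem_insert y _
    simpa [rIdeal] using this
  have hxmem : x = y ∨ ∃ t ∈ genSg D, x = sgMul y t := by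
    have : x ∈ rIdeal (genSg D) y := hR ▸ Set.mem_insert x _
    simpa [rIdeal] using this
  rcases hxmem with h | ⟨t, ht, hxy⟩
  · exact h
  rcases hymem with h | ⟨s, hs, hyx⟩
  · exact h.symm
  funext w
  have e1 : x w = t (y w) := congrFun hxy w
  have e2 : y w = s (x w) := congrFun hyx w
  have hu : t (s (x w)) = x w := by rw [← e2, ← e1]
  have key : s (x w) = x w := by
    by_contra hne
    rcases gen_dec hD hs (x w) with h | h
    · exact hne h
    rcases gen_dec hD ht (s (x w)) with h2 | h2
    · exact hne (h2 ▸ hu)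
    · rw [hu] at h2
      omega
  rw [e2, key]

end Helpers

/-- `⟨D⟩` is `R`-trivial iff `D` is acyclic. -/
theorem stmt11 (n : ℕ) (D : Set (Fin n × Fin n)) (hloop : ∀ u : Fin n, (u, u) ∉ D)
    (hne : D.Nonempty) :
    RTrivial (genSg D) ↔ DAcyclic D := by
  constructor
  · intro hRT
    by_contra hcyc
    simp only [DAcyclic, not_not] at hcyc
    exact not_rtrivial_of_cycle hcyc hloop hRT
  · exact rtrivial_of_acyclic
end

section
/- Let D be a digraph with at least one arc. Then ⟨D⟩ is L-trivial if and only if (i) every vertex of D has out-degree at most 1, and (ii) D contains no cycle of length greater than 2. -/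
namespace Stmt12Aux

variable {n : ℕ}

lemma foldl_eq (l : List (Fin n × Fin n)) (h : Fin n → Fin n) :
    l.foldl (fun f p => arcT p.1 p.2 ∘ f) h
      = (l.foldl (fun f p => arcT p.1 p.2 ∘ f) id) ∘ h := by
  induction l generalizing h with
  | nil => rfl
  | cons p l ih =>
      simp only [List.foldl_cons]
      rw [ih (arcT p.1 p.2 ∘ h), ih (arcT p.1 p.2 ∘ id)]
      rfl

lemma gen_mem {D : Set (Fin n × Fin n)} {a b : Fin n} (h : (a, b) ∈ D) :
    arcT a b ∈ genSg D :=
  ⟨[(a, b)], by simp, by simp [h], rfl⟩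

lemma mul_mem {D : Set (Fin n × Fin n)} {x y : Fin n → Fin n}
    (hx : x ∈ genSg D) (hy : y ∈ genSg D) : sgMul x y ∈ genSg D := by
  obtain ⟨lx, hlx, hlxD, rfl⟩ := hx
  obtain ⟨ly, hly, hlyD, rfl⟩ := hy
  refine ⟨lx ++ ly, by simp [hlx], ?_, ?_⟩
  · intro p hp
    rcases List.mem_append.1 hp with h | h
    exacts [hlxD p h, hlyD p h]
  · rw [List.foldl_append,
      foldl_eq ly (List.foldl (fun f p => arcT p.1 p.2 ∘ f) id lx)]
    rfl

lemma sg_induction {D : Set (Fin n × Fin n)} (Q : (Fin n → Fin n) → Prop)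
    (hid : Q id)
    (hstep : ∀ h a b, (a, b) ∈ D → Q h → Q (arcT a b ∘ h)) :
    ∀ α ∈ genSg D, Q α := by
  rintro α ⟨l, -, hlD, rfl⟩
  suffices H : ∀ l : List (Fin n × Fin n), (∀ p ∈ l, p ∈ D) →
      ∀ h, Q h → Q (l.foldl (fun f p => arcT p.1 p.2 ∘ f) h) from H l hlD id hid
  intro l
  induction l with
  | nil => intro _ h hQ; exact hQ
  | cons p l ih =>
      intro hD h hQ
      exact ih (fun q hq => hD q (List.mem_cons_of_mem _ hq)) _
        (hstep h p.1 p.2 (hD p List.mem_cons_self) hQ)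

lemma iterate_mem {D : Set (Fin n × Fin n)} {α : Fin n → Fin n}
    (hα : α ∈ genSg D) : ∀ m, 1 ≤ m → α^[m] ∈ genSg D := by
  intro m
  induction m with
  | zero => omega
  | succ m ih =>
      intro _
      rcases Nat.eq_zero_or_pos m with rfl | hm
      · simpa using hα
      · have : α^[m + 1] = sgMul α α^[m] := by
          rw [Function.iterate_succ]; rfl
        rw [this]
        exact mul_mem hα (ih hm)

lemma exists_idem_pow (h : Fin n → Fin n) :
    ∃ m, 1 ≤ m ∧ h^[m] ∘ h^[m] = h^[m] := by
  obtain ⟨i, j, hne, hij⟩ := Finite.exists_ne_map_eq_of_infinite (fun k : ℕ => h^[k])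
  wlog hlt : i < j generalizing i j
  · exact this j i hne.symm hij.symm (by omega)
  set p := j - i with hp
  have hp1 : 1 ≤ p := by omega
  have key : ∀ N, i ≤ N → h^[N + p] = h^[N] := by
    intro N hN
    have e1 : N + p = (N - i) + j := by omega
    have e2 : N = (N - i) + i := by omega
    rw [e1, Function.iterate_add, ← hij, ← Function.iterate_add, ← e2]
  have key2 : ∀ q N, i ≤ N → h^[N + q * p] = h^[N] := by
    intro q
    induction q with
    | zero => intro N _; simp
    | succ q ih =>
        intro N hN
        have e1 : N + (q + 1) * p = (N + q * p) + p := by ring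
        rw [e1, key (N + q * p) (by omega), ih N hN]
  refine ⟨(i + 1) * p, Nat.mul_pos (by omega) hp1, ?_⟩
  have e3 : h^[(i+1)*p] ∘ h^[(i+1)*p] = h^[(i+1)*p + (i+1) * p] :=
    (Function.iterate_add h _ _).symm
  rw [e3, key2 (i+1) ((i+1)*p) (by nlinarith)]

section reach

variable {E : Set (Fin n × Fin n)}

lemma dreach_head_cases (hE : ∀ a : Fin n, { b | (a, b) ∈ E }.Subsingleton)
    {a b w : Fin n} (hab : (a, b) ∈ E) (h : dreach E a w) :
    w = a ∨ dreach E b w := by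
  rcases Relation.ReflTransGen.cases_head h with h | ⟨c, hc, hcw⟩
  · exact Or.inl h.symm
  · right
    have : c = b := hE a (show c ∈ _ from hc) (show b ∈ _ from hab)
    rwa [this] at hcw

lemma dreach_comp (hE : ∀ a : Fin n, { b | (a, b) ∈ E }.Subsingleton)
    {u w₁ w₂ : Fin n} (h1 : dreach E u w₁) (h2 : dreach E u w₂) :
    dreach E w₁ w₂ ∨ dreach E w₂ w₁ := by
  refine Relation.ReflTransGen.head_induction_on
    (motive := fun a _ => dreach E a w₂ → (dreach E w₁ w₂ ∨ dreach E w₂ w₁)) h1 ?_ ?_ h2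
  · intro hw
    exact Or.inl hw
  · intro a c hac hcw ih haw
    rcases dreach_head_cases hE hac haw with rfl | h
    · exact Or.inr (Relation.ReflTransGen.head hac hcw)
    · exact ih h

end reach

section struct

variable {D : Set (Fin n × Fin n)}

noncomputable def nxt (D : Set (Fin n × Fin n)) : Fin n → Fin n := fun u =>
  letI := Classical.propDecidable (∃ w, (u, w) ∈ D)
  if h : ∃ w, (u, w) ∈ D then h.choose else u

lemma nxt_eq (hdeg : ∀ a : Fin n, { b | (a, b) ∈ D }.Subsingleton)
    {u w : Fin n} (h : (u, w) ∈ D) : nxt D u = w := by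
  have hex : ∃ w', (u, w') ∈ D := ⟨w, h⟩
  unfold nxt
  split
  next h' => exact hdeg u (show h'.choose ∈ _ from h'.choose_spec) (show w ∈ _ from h)
  next h' => exact absurd hex h'

lemma dreach_iterate (hdeg : ∀ a : Fin n, { b | (a, b) ∈ D }.Subsingleton)
    {u w : Fin n} (h : dreach D u w) :
    ∃ k, w = (nxt D)^[k] u ∧ ∀ i < k, ((nxt D)^[i] u, (nxt D)^[i+1] u) ∈ D := by
  induction h with
  | refl => exact ⟨0, rfl, by omega⟩
  | tail h1 harc ih =>
      obtain ⟨k, hk, hks⟩ := ih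
      subst hk
      refine ⟨k + 1, ?_, ?_⟩
      · rw [Function.iterate_succ_apply', nxt_eq hdeg harc]
      · intro i hi
        rcases Nat.lt_succ_iff_lt_or_eq.1 hi with hi | rfl
        · exact hks i hi
        · rw [Function.iterate_succ_apply' (nxt D) i, nxt_eq hdeg harc]
          exact harc

lemma two_cycle (hdeg : ∀ a : Fin n, { b | (a, b) ∈ D }.Subsingleton)
    (hloop : ∀ u : Fin n, (u, u) ∉ D)
    (hcyc : ¬ ∃ (r : ℕ) (v : ℕ → Fin n), IsDCycle D r v ∧ 2 < r)
    {a c : Fin n} (hac : dreach D a c) (hca : dreach D c a) (hne : a ≠ c) :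
    (a, c) ∈ D ∧ (c, a) ∈ D := by
  obtain ⟨k₁, hk₁, hA₁⟩ := dreach_iterate hdeg hac
  obtain ⟨k₂, hk₂, hA₂⟩ := dreach_iterate hdeg hca
  set g := nxt D with hgdef
  have hk₁pos : 0 < k₁ := by
    rcases Nat.eq_zero_or_pos k₁ with rfl | h
    · exact absurd hk₁ (by simpa using hne.symm)
    · exact h
  have hshift : ∀ j, g^[j + k₁] a = g^[j] c := by
    intro j
    rw [Function.iterate_add_apply, ← hk₁]
  have hcl : g^[k₁ + k₂] a = a := by
    rw [Nat.add_comm, hshift k₂, ← hk₂]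
  have hAll : ∀ i < k₁ + k₂, (g^[i] a, g^[i+1] a) ∈ D := by
    intro i hi
    rcases Nat.lt_or_ge i k₁ with h | h
    · exact hA₁ i h
    · have e1 : g^[i] a = g^[i - k₁] c := by
        rw [← hshift, Nat.sub_add_cancel h]
      have e2 : g^[i+1] a = g^[(i - k₁) + 1] c := by
        rw [← hshift]
        congr 1
        omega
      rw [e1, e2]
      exact hA₂ (i - k₁) (by omega)
  have hPex : ∃ j, 0 < j ∧ g^[j] a = a := ⟨k₁ + k₂, by omega, hcl⟩
  obtain ⟨r, ⟨hrpos, hra⟩, hmin⟩ :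
      ∃ r, (0 < r ∧ g^[r] a = a) ∧ ∀ m, m < r → ¬(0 < m ∧ g^[m] a = a) :=
    ⟨Nat.find hPex, Nat.find_spec hPex, fun m hm => Nat.find_min hPex hm⟩
  have hrle : r ≤ k₁ + k₂ := by
    by_contra hh
    exact hmin _ (by omega) ⟨by omega, hcl⟩
  have harcs : ∀ i < r, (g^[i] a, g^[i+1] a) ∈ D := fun i hi => hAll i (by omega)
  have hinj : ∀ i < r, ∀ j < r, g^[i] a = g^[j] a → i = j := by
    have H : ∀ i j, i < j → j < r → g^[i] a = g^[j] a → False := by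
      intro i j hij hjr heq
      have e1 : g^[(r - j) + j] a = a := by
        rw [Nat.sub_add_cancel (by omega)]
        exact hra
      have e2 : g^[(r - j) + i] a = a := by
        rw [Function.iterate_add_apply, heq, ← Function.iterate_add_apply]
        exact e1
      exact hmin ((r - j) + i) (by omega) ⟨by omega, e2⟩
    intro i hi j hj heq
    rcases Nat.lt_trichotomy i j with h | h | h
    · exact absurd heq (fun hh => H i j h hj hh)
    · exact h
    · exact absurd heq.symm (fun hh => H j i h hi hh)
  have hcycle : IsDCycle D r (fun i => g^[i] a) :=
    ⟨hrpos, by simpa using hra, hinj, harcs⟩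
  have hr2 : r ≤ 2 := by
    by_contra hh
    exact hcyc ⟨r, _, hcycle, by omega⟩
  have hr1 : r ≠ 1 := by
    intro h1
    rw [h1, Function.iterate_one] at hra
    have h0 := harcs 0 (by omega)
    rw [show g^[0] a = a from rfl, show g^[0+1] a = g a from by simp, hra] at h0
    exact hloop a h0
  have hr2' : r = 2 := by omega
  subst hr2'
  have hper : ∀ m, g^[m] a = g^[m % 2] a := by
    intro m
    induction m using Nat.strong_induction_on with
    | _ m ih =>
        rcases Nat.lt_or_ge m 2 with h | h
        · rw [Nat.mod_eq_of_lt h]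
        · have e : m = (m - 2) + 2 := by omega
          have h1 : g^[m] a = g^[m - 2] a := by
            conv_lhs => rw [e]
            rw [Function.iterate_add_apply, hra]
          rw [h1, ih (m - 2) (by omega), Nat.mod_eq_sub_mod h]
  have hc1 : c = g a := by
    have hh := hper k₁
    have hmod : k₁ % 2 = 0 ∨ k₁ % 2 = 1 := by omega
    rcases hmod with h0 | h1
    · rw [h0] at hh
      simp only [Function.iterate_zero_apply] at hh
      exact absurd (hk₁.trans hh).symm hne
    · rw [h1, Function.iterate_one] at hh
      exact hk₁.trans hh
  constructor
  · have h0 := harcs 0 (by omega)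
    rwa [show g^[0] a = a from rfl, show g^[0+1] a = g a from by simp, ← hc1] at h0
  · have h1 := harcs 1 (by omega)
    rwa [Function.iterate_one, show g^[1+1] a = a from hra, ← hc1] at h1

lemma mem_dreach (hdeg : ∀ a : Fin n, { b | (a, b) ∈ D }.Subsingleton) :
    ∀ α ∈ genSg D, ∀ v, dreach D v (α v) := by
  refine sg_induction _ (fun v => Relation.ReflTransGen.refl) ?_
  intro h a b hab hQ v
  show dreach D v (arcT a b (h v))
  by_cases hv : h v = a
  · rw [show arcT a b (h v) = b from by simp [arcT, hv]]
    exact (hQ v).tail (show (h v, b) ∈ D from by rw [hv]; exact hab)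
  · rw [show arcT a b (h v) = h v from by simp [arcT, hv]]
    exact hQ v

lemma arcT_mono (hdeg : ∀ a : Fin n, { b | (a, b) ∈ D }.Subsingleton)
    {c d : Fin n} (hcd : (c, d) ∈ D) {p q : Fin n} (h : dreach D p q) :
    dreach D (arcT c d p) (arcT c d q) := by
  by_cases hp : p = c
  · subst hp
    rcases dreach_head_cases hdeg hcd h with rfl | h2
    · exact Relation.ReflTransGen.refl
    · by_cases hq : q = p
      · rw [hq]
        exact Relation.ReflTransGen.refl
      · rw [show arcT p d p = d from by simp [arcT],
          show arcT p d q = q from by simp [arcT, hq]]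
        exact h2
  · by_cases hq : q = c
    · rw [show arcT c d p = p from by simp [arcT, hp],
        show arcT c d q = d from by simp [arcT, hq]]
      exact (show dreach D p c from hq ▸ h).tail hcd
    · rwa [show arcT c d p = p from by simp [arcT, hp],
        show arcT c d q = q from by simp [arcT, hq]]

lemma sg_mono (hdeg : ∀ a : Fin n, { b | (a, b) ∈ D }.Subsingleton) :
    ∀ α ∈ genSg D, ∀ p q, dreach D p q → dreach D (α p) (α q) := by
  refine sg_induction _ (fun p q h => h) ?_
  intro h a b hab hQ p q hpq
  exact arcT_mono hdeg hab (hQ p q hpq)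

lemma dichotomy (hdeg : ∀ a : Fin n, { b | (a, b) ∈ D }.Subsingleton)
    {a b : Fin n} (hab : (a, b) ∈ D) (hba : (b, a) ∈ D) (hneq : a ≠ b) :
    ∀ α ∈ genSg D, α a = α b ∨
      (α a = a ∧ α b = b ∧
        ∀ u, dreach { p | p ∈ D ∧ p.1 ≠ a ∧ p.1 ≠ b } u (α u)) := by
  refine sg_induction _ (Or.inr ⟨rfl, rfl, fun u => Relation.ReflTransGen.refl⟩) ?_
  intro h p q hpq hQ
  rcases hQ with hcol | ⟨ha, hb, hre⟩
  · left
    show arcT p q (h a) = arcT p q (h b)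
    rw [hcol]
  · by_cases hpa : p = a
    · have hq : q = b := hdeg p (show q ∈ _ from hpq) (show b ∈ _ from hpa ▸ hab)
      left
      show arcT p q (h a) = arcT p q (h b)
      rw [ha, hb, hpa, hq]
      simp [arcT]
    · by_cases hpb : p = b
      · have hq : q = a := hdeg p (show q ∈ _ from hpq) (show a ∈ _ from hpb ▸ hba)
        left
        show arcT p q (h a) = arcT p q (h b)
        rw [ha, hb, hpb, hq]
        simp [arcT]
      · right
        have hap : a ≠ p := fun hh => hpa hh.symm
        have hbp : b ≠ p := fun hh => hpb hh.symm
        refine ⟨?_, ?_, ?_⟩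
        · show arcT p q (h a) = a
          rw [ha]
          simp [arcT, hap]
        · show arcT p q (h b) = b
          rw [hb]
          simp [arcT, hbp]
        · intro u
          show dreach _ u (arcT p q (h u))
          by_cases hv : h u = p
          · rw [show arcT p q (h u) = q from by simp [arcT, hv]]
            exact (hre u).tail
              (show (h u, q) ∈ _ from ⟨by rw [hv]; exact hpq, by rw [hv]; exact hpa,
                by rw [hv]; exact hpb⟩)
          · rw [show arcT p q (h u) = h u from by simp [arcT, hv]]
            exact hre u

lemma key (hdeg : ∀ a : Fin n, { b | (a, b) ∈ D }.Subsingleton)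
    (hloop : ∀ u : Fin n, (u, u) ∉ D)
    (hcyc : ¬ ∃ (r : ℕ) (v : ℕ → Fin n), IsDCycle D r v ∧ 2 < r)
    {s t : Fin n → Fin n} (hs : s ∈ genSg D) (ht : t ∈ genSg D)
    {m : ℕ} (hm : 1 ≤ m) (he : (t ∘ s)^[m] ∘ (t ∘ s)^[m] = (t ∘ s)^[m]) :
    (t ∘ s)^[m] ∘ t = (t ∘ s)^[m] := by
  have hgS : (t ∘ s) ∈ genSg D := mul_mem hs ht
  set g := t ∘ s with hgdef
  set e := g^[m] with hedef
  have heS : e ∈ genSg D := iterate_mem hgS m hm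
  funext v
  show e (t v) = e v
  by_cases hne : e (t v) = e v
  · exact hne
  exfalso
  set a := e v with hadef
  set b := e (t v) with hbdef
  -- a reaches b
  have h1 : dreach D v (t v) := mem_dreach hdeg t ht v
  have hab : dreach D a b := sg_mono hdeg e heS v (t v) h1
  -- t v reaches g^[m] v
  have h2 : dreach D (t v) (g v) := sg_mono hdeg t ht v (s v) (mem_dreach hdeg s hs v)
  have h3 : ∀ k, dreach D (g v) (g^[k] (g v)) := by
    intro k
    induction k with
    | zero => exact Relation.ReflTransGen.refl
    | succ k ih =>
        rw [Function.iterate_succ_apply']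
        exact ih.trans (mem_dreach hdeg g hgS (g^[k] (g v)))
  have h4 : dreach D (t v) (g^[m] v) := by
    have em : m = (m - 1) + 1 := by omega
    rw [em, Function.iterate_succ_apply]
    exact h2.trans (h3 (m - 1))
  have heide : e (e v) = e v := congrFun he v
  have hba : dreach D b a := by
    have h5 := sg_mono hdeg e heS (t v) (g^[m] v) h4
    rwa [show e (g^[m] v) = a from heide] at h5
  have hne' : a ≠ b := fun hh => hne hh.symm
  obtain ⟨hD1, hD2⟩ := two_cycle hdeg hloop hcyc hab hba hne'
  have hea : e a = a := heide
  have heb : e b = b := congrFun he (t v)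
  -- dichotomy for e
  have hdie := dichotomy hdeg hD1 hD2 hne' e heS
  rcases hdie with hcol | ⟨-, -, hre⟩
  · rw [hea, heb] at hcol
    exact hne' hcol
  -- dichotomy for g
  have hgcongr : ∀ {x y : Fin n}, g x = g y → e x = e y := by
    intro x y hxy
    have em : m = (m - 1) + 1 := by omega
    rw [hedef, em, Function.iterate_succ_apply, Function.iterate_succ_apply, hxy]
  rcases dichotomy hdeg hD1 hD2 hne' g hgS with hcol | ⟨hga, hgb, -⟩
  · exact hne' (hea ▸ heb ▸ hgcongr hcol)
  -- dichotomy for s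
  rcases dichotomy hdeg hD1 hD2 hne' s hs with hcol | ⟨hsa, hsb, -⟩
  · have : g a = g b := congrArg t hcol
    exact hne' (hea ▸ heb ▸ hgcongr this)
  -- dichotomy for t
  rcases dichotomy hdeg hD1 hD2 hne' t ht with hcol | ⟨-, -, hrt⟩
  · -- t a = t b with s a = a, s b = b gives g a = g b
    have : g a = g b := by
      show t (s a) = t (s b)
      rw [hsa, hsb]
      exact hcol
    exact hne' (hea ▸ heb ▸ hgcongr this)
  -- final contradiction via the restricted digraph
  set D' : Set (Fin n × Fin n) := { p | p ∈ D ∧ p.1 ≠ a ∧ p.1 ≠ b } with hD'def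
  have hdeg' : ∀ c : Fin n, { d | (c, d) ∈ D' }.Subsingleton := by
    intro c x hx y hy
    exact hdeg c (show x ∈ _ from hx.1) (show y ∈ _ from hy.1)
  have noOut : ∀ {c w : Fin n}, (c = a ∨ c = b) → dreach D' c w → w = c := by
    intro c w hc hw
    rcases Relation.ReflTransGen.cases_head hw with h | ⟨z, hz, -⟩
    · exact h.symm
    · exfalso
      rcases hc with rfl | rfl
      · exact hz.2.1 rfl
      · exact hz.2.2 rfl
  have hva : dreach D' v a := hre v
  have hvtv : dreach D' v (t v) := hrt v
  have htvb : dreach D' (t v) b := hre (t v)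
  rcases dreach_comp hdeg' hva hvtv with h | h
  · have : t v = a := noOut (Or.inl rfl) h
    rw [hbdef, this, hea] at hne'
    exact hne' rfl
  · rcases dreach_comp hdeg' h htvb with h2 | h2
    · exact hne' (noOut (Or.inl rfl) h2).symm
    · exact hne' (noOut (Or.inr rfl) h2)

end struct

section mutdiv

lemma lIdeal_subset {S : Set (Fin n → Fin n)}
    (hS : ∀ x ∈ S, ∀ y ∈ S, sgMul x y ∈ S)
    {x y σ : Fin n → Fin n} (hσ : σ ∈ S) (hx : x = sgMul σ y) :
    lIdeal S x ⊆ lIdeal S y := by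
  intro z hz
  rcases Set.mem_insert_iff.1 hz with rfl | hz
  · exact Set.mem_insert_iff.2 (Or.inr ⟨σ, hσ, hx⟩)
  · obtain ⟨s, hs, rfl⟩ := hz
    refine Set.mem_insert_iff.2 (Or.inr ⟨sgMul s σ, hS s hs σ hσ, ?_⟩)
    rw [hx]
    rfl

lemma lrel_of_mut {S : Set (Fin n → Fin n)}
    (hS : ∀ x ∈ S, ∀ y ∈ S, sgMul x y ∈ S)
    {x y σ τ : Fin n → Fin n} (hσ : σ ∈ S) (hτ : τ ∈ S)
    (hx : x = sgMul σ y) (hy : y = sgMul τ x) : LRel S x y :=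
  Set.Subset.antisymm (lIdeal_subset hS hσ hx) (lIdeal_subset hS hτ hy)

end mutdiv

section cyc

variable {D : Set (Fin n × Fin n)} {r : ℕ} {v : ℕ → Fin n}

/-- One full "descending pass" around the cycle. -/
def rho (v : ℕ → Fin n) (r : ℕ) : Fin n → Fin n :=
  ((List.range r).map (fun k => (v (r-1-k), v (r-k)))).foldl
    (fun f p => arcT p.1 p.2 ∘ f) id

lemma rho_mem (hc : IsDCycle D r v) : rho v r ∈ genSg D := by
  obtain ⟨hr1, hvr, hinj, harc⟩ := hc
  refine ⟨_, ?_, ?_, rfl⟩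
  · simp [List.range_eq_nil]
    omega
  · intro p hp
    simp only [List.mem_map, List.mem_range] at hp
    obtain ⟨k, hk, rfl⟩ := hp
    have e1 : r - k = (r - 1 - k) + 1 := by omega
    rw [e1]
    exact harc (r - 1 - k) (by omega)

lemma rho_pass (hc : IsDCycle D r v) :
    ∀ m ≤ r - 1,
      (∀ j, j + m ≤ r - 1 →
        ((List.range m).map (fun k => (v (r-1-k), v (r-k)))).foldl
          (fun f p => arcT p.1 p.2 ∘ f) id (v j) = v j) ∧
      (∀ j, r - m ≤ j → j ≤ r - 1 →
        ((List.range m).map (fun k => (v (r-1-k), v (r-k)))).foldl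
          (fun f p => arcT p.1 p.2 ∘ f) id (v j) = v (j + 1)) ∧
      (∀ u, (∀ j < r, u ≠ v j) →
        ((List.range m).map (fun k => (v (r-1-k), v (r-k)))).foldl
          (fun f p => arcT p.1 p.2 ∘ f) id u = u) := by
  obtain ⟨hr1, hvr, hinj, harc⟩ := hc
  intro m
  induction m with
  | zero =>
      intro _
      refine ⟨fun j _ => rfl, fun j h1 h2 => by omega, fun u _ => rfl⟩
  | succ m ih =>
      intro hm
      obtain ⟨ih1, ih2, ih3⟩ := ih (by omega)
      have hfold : ∀ w : Fin n,
          ((List.range (m+1)).map (fun k => (v (r-1-k), v (r-k)))).foldl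
            (fun f p => arcT p.1 p.2 ∘ f) id w
          = arcT (v (r-1-m)) (v (r-m))
              (((List.range m).map (fun k => (v (r-1-k), v (r-k)))).foldl
                (fun f p => arcT p.1 p.2 ∘ f) id w) := by
        intro w
        rw [List.range_succ, List.map_append, List.foldl_append]
        rfl
      have hne_idx : ∀ i j, i < r → j < r → i ≠ j → v i ≠ v j := by
        intro i j hi hj hij heq
        exact hij (hinj i hi j hj heq)
      refine ⟨?_, ?_, ?_⟩
      · intro j hj
        rw [hfold, ih1 j (by omega),
          show arcT (v (r-1-m)) (v (r-m)) (v j) = v j from by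
            simp [arcT, hne_idx j (r-1-m) (by omega) (by omega) (by omega)]]
      · intro j hj1 hj2
        rcases Nat.eq_or_lt_of_le hj1 with heq | hlt
        · -- j = r - (m+1) = r-1-m : gets moved now
          have hj : j = r - 1 - m := by omega
          rw [hfold, ih1 j (by omega), hj,
            show arcT (v (r-1-m)) (v (r-m)) (v (r-1-m)) = v (r-m) from by
              simp [arcT]]
          congr 1
          omega
        · -- j ≥ r - m : already moved by earlier steps
          have hj3 : r - m ≤ j := by omega
          rw [hfold, ih2 j hj3 hj2]
          rcases Nat.lt_or_ge (j+1) r with hlt2 | hge2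
          · rw [show arcT (v (r-1-m)) (v (r-m)) (v (j+1)) = v (j+1) from by
              simp [arcT, hne_idx (j+1) (r-1-m) (by omega) (by omega) (by omega)]]
          · -- j + 1 = r, use v r = v 0
            have hj4 : j + 1 = r := by omega
            rw [hj4, hvr,
              show arcT (v (r-1-m)) (v (r-m)) (v 0) = v 0 from by
                simp [arcT, hne_idx 0 (r-1-m) (by omega) (by omega) (by omega)]]
      · intro u hu
        rw [hfold, ih3 u hu,
          show arcT (v (r-1-m)) (v (r-m)) u = u from by
            simp [arcT, hu (r-1-m) (by omega)]]

lemma rho_act (hc : IsDCycle D r v) (hr : 2 ≤ r) :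
    (∀ j, j ≤ r - 2 → rho v r (v j) = v (j+1)) ∧
    (rho v r (v (r-1)) = v 1) ∧
    (∀ u, (∀ j < r, u ≠ v j) → rho v r u = u) := by
  obtain ⟨p1, p2, p3⟩ := rho_pass hc (r-1) (le_refl _)
  obtain ⟨hr1, hvr, hinj, harc⟩ := hc
  have hne_idx : ∀ i j, i < r → j < r → i ≠ j → v i ≠ v j := by
    intro i j hi hj hij heq
    exact hij (hinj i hi j hj heq)
  have hfold : ∀ w : Fin n, rho v r w
      = arcT (v 0) (v 1)
          (((List.range (r-1)).map (fun k => (v (r-1-k), v (r-k)))).foldl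
            (fun f p => arcT p.1 p.2 ∘ f) id w) := by
    intro w
    have e : List.range r = List.range ((r - 1) + 1) := by
      congr 1
      omega
    rw [rho, e, List.range_succ, List.map_append, List.foldl_append]
    show (arcT (v (r-1-(r-1))) (v (r-(r-1))) ∘ _) w = _
    rw [show r-1-(r-1) = 0 from by omega, show r-(r-1) = 1 from by omega]
    rfl
  refine ⟨?_, ?_, ?_⟩
  · intro j hj
    rcases Nat.eq_zero_or_pos j with rfl | hjpos
    · rw [hfold, p1 0 (by omega)]
      simp [arcT]
    · rw [hfold, p2 j (by omega) (by omega),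
        show arcT (v 0) (v 1) (v (j+1)) = v (j+1) from by
          simp [arcT, hne_idx (j+1) 0 (by omega) (by omega) (by omega)]]
  · rw [hfold, p2 (r-1) (by omega) (le_refl _),
      show (r-1)+1 = r from by omega, hvr]
    simp [arcT]
  · intro u hu
    rw [hfold, p3 u hu,
      show arcT (v 0) (v 1) u = u from by simp [arcT, hu 0 (by omega)]]

lemma rho_iter (hc : IsDCycle D r v) (hr : 2 ≤ r) :
    ∀ d j, 1 ≤ j → j + d ≤ r - 1 → (rho v r)^[d] (v j) = v (j + d) := by
  obtain ⟨h1, h2, h3⟩ := rho_act hc hr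
  intro d
  induction d with
  | zero => intro j _ _; simp
  | succ d ih =>
      intro j hj1 hj2
      rw [Function.iterate_succ_apply, h1 j (by omega), ih (j+1) (by omega) (by omega)]
      congr 1
      omega

lemma rho_period (hc : IsDCycle D r v) (hr : 2 ≤ r) :
    ∀ j, 1 ≤ j → j ≤ r - 1 → (rho v r)^[r-1] (v j) = v j := by
  obtain ⟨h1, h2, h3⟩ := rho_act hc hr
  intro j hj1 hj2
  have e1 : (rho v r)^[r-1-j] (v j) = v (r-1) := by
    rw [rho_iter hc hr (r-1-j) j hj1 (by omega)]
    congr 1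
    omega
  have e2 : (rho v r)^[r-j] (v j) = v 1 := by
    rw [show r - j = (r-1-j) + 1 from by omega, Function.iterate_succ_apply', e1, h2]
  have e3 : (rho v r)^[r-1] (v j) = (rho v r)^[j-1] ((rho v r)^[r-j] (v j)) := by
    rw [← Function.iterate_add_apply]
    congr 1
    omega
  rw [e3, e2, rho_iter hc hr (j-1) 1 (le_refl _) (by omega)]
  congr 1
  omega

lemma rho_pow_r (hc : IsDCycle D r v) (hr : 2 ≤ r) :
    (rho v r)^[r] = rho v r := by
  obtain ⟨h1, h2, h3⟩ := rho_act hc hr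
  funext u
  set f := rho v r with hf
  by_cases hu : ∃ j, j < r ∧ u = v j
  · obtain ⟨j, hj, rfl⟩ := hu
    rw [show f^[r] (v j) = f^[r-1] (f (v j)) from by
      conv_lhs => rw [show r = (r-1) + 1 from by omega]
      rw [Function.iterate_succ_apply]]
    rcases Nat.lt_or_ge j (r-1) with hjl | hjg
    · rw [h1 j (by omega)]
      exact rho_period hc hr (j+1) (by omega) (by omega)
    · have hj' : j = r - 1 := by omega
      rw [hj', h2]
      exact rho_period hc hr 1 (le_refl _) (by omega)
  · push_neg at hu
    have hfix : f u = u := h3 u (fun j hj => hu j hj)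
    rw [Function.iterate_fixed hfix, hfix]

end cyc

end Stmt12Aux

/-- `⟨D⟩` is `L`-trivial iff every vertex has out-degree at most one
and `D` has no cycle of length greater than `2`. -/
theorem stmt12 (n : ℕ) (D : Set (Fin n × Fin n)) (hloop : ∀ u : Fin n, (u, u) ∉ D)
    (hne : D.Nonempty) :
    LTrivial (genSg D) ↔
      ((∀ a : Fin n, { b : Fin n | (a, b) ∈ D }.Subsingleton) ∧
        ¬ ∃ (r : ℕ) (v : ℕ → Fin n), IsDCycle D r v ∧ 2 < r) := by
  constructor
  · intro hL
    constructor
    · intro a p hp q hq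
      by_contra hpq
      have hp' : (a, p) ∈ D := hp
      have hq' : (a, q) ∈ D := hq
      have hpa : p ≠ a := fun h => hloop a (h ▸ hp')
      have hqa : q ≠ a := fun h => hloop a (h ▸ hq')
      have hx := Stmt12Aux.gen_mem hp'
      have hy := Stmt12Aux.gen_mem hq'
      have h1 : arcT a p = sgMul (arcT a p) (arcT a q) := by
        funext u
        show arcT a p u = arcT a q (arcT a p u)
        by_cases hu : u = a
        · simp [arcT, hu, hpa]
        · simp [arcT, hu]
      have h2 : arcT a q = sgMul (arcT a q) (arcT a p) := by
        funext u
        show arcT a q u = arcT a p (arcT a q u)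
        by_cases hu : u = a
        · simp [arcT, hu, hqa]
        · simp [arcT, hu]
      have hrel := Stmt12Aux.lrel_of_mut
        (fun x hx y hy => Stmt12Aux.mul_mem hx hy) hx hy h1 h2
      have heq := hL _ hx _ hy hrel
      have hval := congrFun heq a
      simp [arcT] at hval
      exact hpq hval
    · rintro ⟨r, v, hc, hr⟩
      have hr2 : 2 ≤ r := by omega
      have hmem := Stmt12Aux.rho_mem hc
      obtain ⟨h1, h2, h3⟩ := Stmt12Aux.rho_act hc hr2
      set f := Stmt12Aux.rho v r with hf
      have hf2 : sgMul f f ∈ genSg D := Stmt12Aux.mul_mem hmem hmem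
      have hfpow : f^[r-2] ∈ genSg D := Stmt12Aux.iterate_mem hmem (r-2) (by omega)
      have hpr := Stmt12Aux.rho_pow_r hc hr2
      rw [← hf] at hpr
      have hx_eq : f = sgMul (f^[r-2]) (sgMul f f) := by
        funext u
        show f u = f (f (f^[r-2] u))
        have e : f (f (f^[r-2] u)) = f^[r] u := by
          rw [← Function.iterate_succ_apply' f (r-2),
            ← Function.iterate_succ_apply' f (r-2+1)]
          congr 1
          omega
        rw [e, hpr]
      have hrel := Stmt12Aux.lrel_of_mut
        (fun x hx y hy => Stmt12Aux.mul_mem hx hy) hfpow hmem hx_eq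
        (rfl : sgMul f f = sgMul f f)
      have heq := hL _ hmem _ hf2 hrel
      have hval : v 1 = v 2 := by
        have e0 : f (v 0) = v 1 := h1 0 (by omega)
        have e1 : f (v 1) = v 2 := h1 1 (by omega)
        calc v 1 = f (v 0) := e0.symm
          _ = f (f (v 0)) := congrFun heq (v 0)
          _ = f (v 1) := by rw [e0]
          _ = v 2 := e1
      exact absurd (hc.2.2.1 1 (by omega) 2 (by omega) hval) (by omega)
  · rintro ⟨hdeg, hcyc⟩
    intro x hx y hy hLrel
    have hxy : x ∈ lIdeal (genSg D) y := by
      rw [← hLrel]; exact Set.mem_insert _ _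
    have hyx : y ∈ lIdeal (genSg D) x := by
      rw [hLrel]; exact Set.mem_insert _ _
    rcases Set.mem_insert_iff.1 hxy with heq | ⟨s, hs, hxs⟩
    · exact heq
    rcases Set.mem_insert_iff.1 hyx with heq | ⟨t, ht, hyt⟩
    · exact heq.symm
    have hxg : ∀ u, x ((t ∘ s) u) = x u := by
      intro u
      have e1 : x (t (s u)) = y (s u) := (congrFun hyt (s u)).symm
      exact e1.trans (congrFun hxs u).symm
    obtain ⟨m, hm, he⟩ := Stmt12Aux.exists_idem_pow (t ∘ s)
    have hxe : ∀ k u, x ((t ∘ s)^[k] u) = x u := by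
      intro k
      induction k with
      | zero => intro u; rfl
      | succ k ih =>
          intro u
          rw [Function.iterate_succ_apply]
          rw [ih ((t ∘ s) u), hxg u]
    have hket := Stmt12Aux.key hdeg hloop hcyc hs ht hm he
    funext u
    have h1 : y u = x (t u) := congrFun hyt u
    have h2 : x (t u) = x ((t ∘ s)^[m] (t u)) := (hxe m (t u)).symm
    have h3 : (t ∘ s)^[m] (t u) = (t ∘ s)^[m] u := congrFun hket u
    rw [h1, h2, h3, hxe m u]
end

section
/- Let D be a connected digraph with at least 3 vertices. Then the following are equivalent: (i) ⟨D⟩ is a band (every element is idempotent); (ii) ⟨D⟩ is completely regular (every element belongs to a subgroup of ⟨D⟩); (iii) D is directed-bipartite. -/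
/-- `D` is directed-bipartite: the vertices split into `V₁`, `V₂` with every arc going
from `V₁` to `V₂`. -/
def DirectedBipartite {n : ℕ} (D : Set (Fin n × Fin n)) : Prop :=
  ∃ V₁ V₂ : Set (Fin n), Disjoint V₁ V₂ ∧ V₁ ∪ V₂ = Set.univ ∧
    ∀ p ∈ D, p.1 ∈ V₁ ∧ p.2 ∈ V₂

lemma no2path {n : ℕ} {D : Set (Fin n × Fin n)}
    (hcr : ∀ x ∈ genSg D, ∃ G, IsSubgroupIn (genSg D) G ∧ x ∈ G)
    {u v w : Fin n} (huv : (u, v) ∈ D) (hvw : (v, w) ∈ D)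
    (huv' : u ≠ v) (hvw' : v ≠ w) (hwu : w ≠ u) : False := by
  set α : Fin n → Fin n := arcT u v ∘ arcT v w with hα
  have hmem : α ∈ genSg D := by
    refine ⟨[(v, w), (u, v)], by simp, by simp [huv, hvw], ?_⟩
    funext x
    simp [hα, List.foldl, Function.comp]
  have e1 : arcT v w u = u := if_neg huv'
  have e2 : arcT u v u = v := if_pos rfl
  have e3 : arcT v w v = w := if_pos rfl
  have e4 : arcT u v w = w := if_neg hwu
  have e5 : arcT v w w = w := if_neg hvw'.symm
  have hαu : α u = v := by simp [hα, Function.comp, e1, e2]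
  have hαv : α v = w := by simp [hα, Function.comp, e3, e4]
  have hαw : α w = w := by simp [hα, Function.comp, e5, e4]
  obtain ⟨G, ⟨hGS, hGmul, e, heG, hid, hinv⟩, hαG⟩ := hcr α hmem
  obtain ⟨y, hyG, hxy, hyx⟩ := hinv α hαG
  have hid' : sgMul α e = α := (hid α hαG).2
  have hev : e v = v := by
    have := congrFun hid' u
    simpa [sgMul, Function.comp, hαu] using this
  have hew : e w = w := by
    have := congrFun hid' v
    simpa [sgMul, Function.comp, hαv] using this
  have h1 : y w = v := by
    have := congrFun hxy v
    simpa [sgMul, Function.comp, hαv, hev] using this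
  have h2 : y w = w := by
    have := congrFun hxy w
    simpa [sgMul, Function.comp, hαw, hew] using this
  exact hvw' (h1 ▸ h2)

lemma crossEdge {n : ℕ} {G : SimpleGraph (Fin n)} {b c : Fin n} :
    ∀ {z : Fin n}, Relation.ReflTransGen G.Adj z c → z ≠ c → z ≠ b →
      ∃ z' t, z' ≠ c ∧ z' ≠ b ∧ (t = c ∨ t = b) ∧ G.Adj z' t := by
  intro z h
  induction h using Relation.ReflTransGen.head_induction_on with
  | refl => exact fun h _ => absurd rfl h
  | head hadj _ ih =>
    rename_i p q _
    intro hp1 hp2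
    by_cases hq : q = c ∨ q = b
    · exact ⟨p, q, hp1, hp2, hq, hadj⟩
    · push_neg at hq
      exact ih hq.1 hq.2

/-- For a connected digraph with at least three vertices the following
are equivalent: `⟨D⟩` is a band; `⟨D⟩` is completely regular; `D` is directed-bipartite. -/
theorem stmt14 (n : ℕ) (hn : 3 ≤ n) (D : Set (Fin n × Fin n))
    (hloop : ∀ u : Fin n, (u, u) ∉ D) (hconn : (underlying D).Connected) :
    List.TFAE [
      ∀ x ∈ genSg D, sgMul x x = x,
      ∀ x ∈ genSg D, ∃ G, IsSubgroupIn (genSg D) G ∧ x ∈ G,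
      DirectedBipartite D] := by
  tfae_have 1 → 2 := by
    intro h1 f hf
    refine ⟨{f}, ⟨?_, ?_, f, rfl, ?_, ?_⟩, rfl⟩
    · intro a ha
      rw [Set.mem_singleton_iff.mp ha]; exact hf
    · intro a ha b hb
      rw [Set.mem_singleton_iff.mp ha, Set.mem_singleton_iff.mp hb]
      exact Set.mem_singleton_iff.mpr (h1 f hf)
    · intro a ha
      rw [Set.mem_singleton_iff.mp ha]
      exact ⟨h1 f hf, h1 f hf⟩
    · intro a ha
      exact ⟨f, rfl, by rw [Set.mem_singleton_iff.mp ha]; exact ⟨h1 f hf, h1 f hf⟩⟩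
  tfae_have 2 → 3 := by
    intro hcr
    have key : ∀ a b c : Fin n, (a, b) ∈ D → (b, c) ∈ D → False := by
      intro a b c hab hbc
      have hab' : a ≠ b := fun h => hloop b (h ▸ hab)
      have hbc' : b ≠ c := fun h => hloop b (h ▸ hbc)
      by_cases hca : c = a
      · subst hca
        obtain ⟨z, hz1, hz2⟩ : ∃ z : Fin n, z ≠ c ∧ z ≠ b := by
          by_contra hcon
          push_neg at hcon
          have hsub : (Finset.univ : Finset (Fin n)) ⊆ {c, b} := by
            intro z _
            rcases em (z = c) with h | h
            · simp [h]
            · simp [hcon z h]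
          have hle := Finset.card_le_card hsub
          have h2 : ({c, b} : Finset (Fin n)).card ≤ 2 :=
            (Finset.card_insert_le _ _).trans (by simp)
          simp [Finset.card_univ] at hle
          omega
        have hreach : Relation.ReflTransGen (underlying D).Adj z c :=
          (SimpleGraph.reachable_iff_reflTransGen z c).mp (hconn.preconnected z c)
        obtain ⟨z', t, hz'c, hz'b, ht, hne, harc⟩ := crossEdge hreach hz1 hz2
        rcases ht with rfl | rfl
        · rcases harc with h | h
          · exact no2path hcr h hab hz'c hab' hz'b.symm
          · exact no2path hcr hbc h hbc' hne.symm hz'b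
        · rcases harc with h | h
          · exact no2path hcr h hbc hz'b hbc' hz'c.symm
          · exact no2path hcr hab h hab' hne.symm hz'c
      · exact no2path hcr hab hbc hab' hbc' hca
    refine ⟨{v | ∃ w, (v, w) ∈ D}, {v | ∃ w, (v, w) ∈ D}ᶜ,
      disjoint_compl_right, Set.union_compl_self _, ?_⟩
    rintro ⟨a, b⟩ hab
    refine ⟨⟨b, hab⟩, ?_⟩
    rintro ⟨c, hc⟩
    exact key a b c hab hc
  tfae_have 3 → 1 := by
    rintro ⟨V₁, V₂, hdisj, huniv, harc⟩ x hx
    obtain ⟨l, hne, hl, rfl⟩ := hx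
    have inv : ∀ (l : List (Fin n × Fin n)), (∀ p ∈ l, p ∈ D) →
        ∀ f : Fin n → Fin n, (∀ v, f v = v ∨ f v ∈ V₂) →
        ∀ v, (l.foldl (fun f p => arcT p.1 p.2 ∘ f) f) v = v ∨
          (l.foldl (fun f p => arcT p.1 p.2 ∘ f) f) v ∈ V₂ := by
      intro l
      induction l with
      | nil => intro _ f hf v; exact hf v
      | cons p l ih =>
        intro hmem f hf
        have hp := hmem p List.mem_cons_self
        obtain ⟨hp1, hp2⟩ := harc p hp
        refine ih (fun q hq => hmem q (List.mem_cons_of_mem p hq)) _ ?_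
        intro v
        rcases hf v with h | h
        · by_cases hv : v = p.1
          · right; subst hv; simp [Function.comp, arcT, h, hp2]
          · left; simp [Function.comp, arcT, h, hv]
        · right
          have hfv : f v ≠ p.1 := fun heq => Set.disjoint_left.mp hdisj (heq ▸ hp1) h
          simp [Function.comp, arcT, hfv, h]
    have fix2 : ∀ (l : List (Fin n × Fin n)), (∀ p ∈ l, p ∈ D) →
        ∀ f : Fin n → Fin n, (∀ v ∈ V₂, f v = v) →
        ∀ v ∈ V₂, (l.foldl (fun f p => arcT p.1 p.2 ∘ f) f) v = v := by
      intro l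
      induction l with
      | nil => intro _ f hf v hv; exact hf v hv
      | cons p l ih =>
        intro hmem f hf
        have hp := hmem p List.mem_cons_self
        obtain ⟨hp1, hp2⟩ := harc p hp
        refine ih (fun q hq => hmem q (List.mem_cons_of_mem p hq)) _ ?_
        intro v hv
        have hvp : v ≠ p.1 := fun heq => Set.disjoint_left.mp hdisj (heq ▸ hp1) hv
        simp [Function.comp, arcT, hf v hv, hvp]
    set α := l.foldl (fun f p => arcT p.1 p.2 ∘ f) id with hαdef
    funext v
    show α (α v) = α v
    rcases inv l hl id (fun v => Or.inl rfl) v with h | h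
    · have h' : α v = v := h
      rw [h', h']
    · exact fix2 l hl id (fun _ _ => rfl) (α v) h
  tfae_finish
end

section
/- Let D be a connected acyclic digraph with at least 3 vertices. Then the following are equivalent: (i) ⟨D⟩ is a band; (ii) ⟨D⟩ is completely regular; (iii) ⟨D⟩ is regular; (iv) D is directed-bipartite. -/
lemma exists_walk {n} {D : Set (Fin n × Fin n)} {u v : Fin n} (h : dreach D u v) :
    ∃ (r : ℕ) (w : ℕ → Fin n), w 0 = u ∧ w r = v ∧ ∀ i < r, (w i, w (i+1)) ∈ D := by
  induction h with
  | refl => exact ⟨0, fun _ => u, rfl, rfl, by omega⟩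
  | @tail b c _ harc ih =>
    obtain ⟨r, w, h0, hr, hw⟩ := ih
    refine ⟨r+1, fun i => if i ≤ r then w i else c, by simp [h0], by simp, ?_⟩
    intro i hi
    rcases Nat.lt_or_ge i r with h | h
    · simpa [Nat.le_of_lt h, Nat.succ_le_of_lt h] using hw i h
    · have : i = r := by omega
      subst this
      simpa [hr] using harc

lemma cycle_of_closed_walk {n} {D : Set (Fin n × Fin n)} :
    ∀ r, 1 ≤ r → ∀ w : ℕ → Fin n, w r = w 0 → (∀ i < r, (w i, w (i+1)) ∈ D) →
      HasDCycle D := by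
  intro r
  induction r using Nat.strong_induction_on with
  | _ r ih =>
    intro hr w hclosed harc
    by_cases hinj : ∀ i < r, ∀ j < r, w i = w j → i = j
    · exact ⟨r, w, hr, hclosed, hinj, harc⟩
    · push_neg at hinj
      obtain ⟨i, hi, j, hj, heq, hne⟩ := hinj
      -- wlog i < j via helper
      have key : ∀ i j, i < r → j < r → i < j → w i = w j → HasDCycle D := by
        intro i j hi hj hij heq
        refine ih (j - i) (by omega) (by omega) (fun k => w (i + k)) ?_ ?_
        · simp only [Nat.add_zero]
          rw [show i + (j - i) = j by omega, heq]
        · intro k hk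
          have : (w (i + k), w (i + k + 1)) ∈ D := harc (i + k) (by omega)
          simpa [Nat.add_assoc] using this
      rcases Nat.lt_or_ge i j with h | h
      · exact key i j hi hj h heq
      · exact key j i hj hi (by omega) heq.symm

lemma dreach_antisymm {n} {D : Set (Fin n × Fin n)} (hacyc : DAcyclic D) {u v : Fin n}
    (huv : dreach D u v) (hvu : dreach D v u) : u = v := by
  by_contra hne
  obtain ⟨r₁, w₁, h10, h1r, h1a⟩ := exists_walk huv
  obtain ⟨r₂, w₂, h20, h2r, h2a⟩ := exists_walk hvu
  have hr₁ : 1 ≤ r₁ := by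
    rcases Nat.eq_zero_or_pos r₁ with h | h
    · subst h; exact absurd (h10 ▸ h1r) hne
    · exact h
  have hw2 : ∀ i, r₁ ≤ i → (fun i => if i ≤ r₁ then w₁ i else w₂ (i - r₁)) i = w₂ (i - r₁) := by
    intro i hle
    rcases Nat.eq_or_lt_of_le hle with h | h
    · subst h; simp [h1r, h20]
    · simp [Nat.not_le.mpr h]
  apply hacyc
  refine cycle_of_closed_walk (r₁ + r₂) (by omega)
    (fun i => if i ≤ r₁ then w₁ i else w₂ (i - r₁)) ?_ ?_
  · rw [show (if r₁ + r₂ ≤ r₁ then w₁ (r₁ + r₂) else w₂ (r₁ + r₂ - r₁)) = w₂ (r₁ + r₂ - r₁) from hw2 (r₁ + r₂) (by omega)]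
    simp [h2r, h10, hr₁]
  · intro i hi
    rcases Nat.lt_or_ge i r₁ with h | h
    · simpa [Nat.le_of_lt h, Nat.succ_le_of_lt h] using h1a i h
    · rw [show (if i ≤ r₁ then w₁ i else w₂ (i - r₁)) = w₂ (i - r₁) from hw2 i h, show (if i + 1 ≤ r₁ then w₁ (i + 1) else w₂ (i + 1 - r₁)) = w₂ (i + 1 - r₁) from hw2 (i+1) (by omega)]
      have : (w₂ (i - r₁), w₂ (i - r₁ + 1)) ∈ D := h2a (i - r₁) (by omega)
      rw [show i + 1 - r₁ = i - r₁ + 1 by omega]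
      exact this

lemma dreach_foldl {n} {D : Set (Fin n × Fin n)} :
    ∀ (l : List (Fin n × Fin n)), (∀ p ∈ l, p ∈ D) → ∀ (f : Fin n → Fin n),
    (∀ u, dreach D u (f u)) → ∀ u,
      dreach D u ((l.foldl (fun f p => arcT p.1 p.2 ∘ f) f) u) := by
  intro l
  induction l with
  | nil => intro _ f hf u; exact hf u
  | cons p l ih =>
    intro hl f hf u
    simp only [List.foldl_cons]
    apply ih (fun q hq => hl q (List.mem_cons_of_mem _ hq))
    intro v
    by_cases h : f v = p.1
    · have : arcT p.1 p.2 (f v) = p.2 := by simp [arcT, h]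
      rw [Function.comp_apply, this]
      exact (hf v).tail (show (f v, p.2) ∈ D by rw [h, Prod.mk.eta]; exact hl p (List.mem_cons_self))
    · have : arcT p.1 p.2 (f v) = f v := by simp [arcT, h]
      rw [Function.comp_apply, this]
      exact hf v

lemma dreach_genSg {n} {D : Set (Fin n × Fin n)} {α : Fin n → Fin n}
    (hα : α ∈ genSg D) (u : Fin n) : dreach D u (α u) := by
  obtain ⟨l, -, hl, rfl⟩ := hα
  exact dreach_foldl l hl id (fun u => Relation.ReflTransGen.refl) u

lemma bip_foldl {n} {D : Set (Fin n × Fin n)} {V₁ V₂ : Set (Fin n)}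
    (hd : Disjoint V₁ V₂) (harc : ∀ p ∈ D, p.1 ∈ V₁ ∧ p.2 ∈ V₂) :
    ∀ (l : List (Fin n × Fin n)), (∀ p ∈ l, p ∈ D) → ∀ f : Fin n → Fin n,
      (∀ v, (v ∈ V₂ → f v = v) ∧ (f v = v ∨ f v ∈ V₂)) →
      ∀ v, ((l.foldl (fun f p => arcT p.1 p.2 ∘ f) f) v = v ∨
            (l.foldl (fun f p => arcT p.1 p.2 ∘ f) f) v ∈ V₂) ∧
           (v ∈ V₂ → (l.foldl (fun f p => arcT p.1 p.2 ∘ f) f) v = v) := by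
  intro l
  induction l with
  | nil => intro _ f hf v; exact ⟨(hf v).2, (hf v).1⟩
  | cons p l ih =>
    intro hl f hf v
    simp only [List.foldl_cons]
    apply ih (fun q hq => hl q (List.mem_cons_of_mem _ hq))
    intro u
    have hp := harc p (hl p (List.mem_cons_self))
    have hp1 : p.1 ∉ V₂ := fun h => (Set.disjoint_left.mp hd hp.1) h
    constructor
    · intro hu
      have hne : u ≠ p.1 := fun h => hp1 (h ▸ hu)
      have := (hf u).1 hu
      simp [arcT, this, hne]
    · by_cases h : f u = p.1
      · right; simp [arcT, h]; exact hp.2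
      · have : arcT p.1 p.2 (f u) = f u := by simp [arcT, h]
        rw [Function.comp_apply, this]
        exact (hf u).2

/-- For a connected acyclic digraph with at least three vertices the
following are equivalent: `⟨D⟩` is a band; `⟨D⟩` is completely regular; `⟨D⟩` is regular;
`D` is directed-bipartite. -/
theorem stmt15 (n : ℕ) (hn : 3 ≤ n) (D : Set (Fin n × Fin n))
    (hloop : ∀ u : Fin n, (u, u) ∉ D) (hconn : (underlying D).Connected)
    (hacyc : DAcyclic D) :
    List.TFAE [
      ∀ x ∈ genSg D, sgMul x x = x,
      ∀ x ∈ genSg D, ∃ G, IsSubgroupIn (genSg D) G ∧ x ∈ G,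
      ∀ x ∈ genSg D, ∃ y ∈ genSg D, sgMul (sgMul x y) x = x,
      DirectedBipartite D] := by
  tfae_have 1 → 2 := by
    intro h x hx
    refine ⟨{x}, ⟨by simpa using hx, ?_, x, rfl, ?_, ?_⟩, rfl⟩
    · intro a ha b hb
      rw [Set.mem_singleton_iff] at ha hb
      rw [ha, hb]; simpa using h x hx
    · intro a ha
      rw [Set.mem_singleton_iff] at ha
      rw [ha]; exact ⟨h x hx, h x hx⟩
    · intro a ha
      rw [Set.mem_singleton_iff] at ha
      rw [ha]; exact ⟨x, rfl, h x hx, h x hx⟩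
  tfae_have 2 → 3 := by
    intro h x hx
    obtain ⟨G, ⟨hsub, hcl, e, heG, hid, hinv⟩, hxG⟩ := h x hx
    obtain ⟨y, hyG, hxy, hyx⟩ := hinv x hxG
    exact ⟨y, hsub hyG, by rw [hxy]; exact (hid x hxG).1⟩
  tfae_have 3 → 4 := by
    intro h3
    refine ⟨{v | ∃ u, (u, v) ∈ D}ᶜ, {v | ∃ u, (u, v) ∈ D}, disjoint_compl_left,
      Set.compl_union_self _, ?_⟩
    rintro p hp
    refine ⟨?_, ⟨p.1, by rwa [Prod.mk.eta]⟩⟩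
    rintro ⟨u, hu⟩
    -- arcs (u, p.1) and (p.1, p.2): build nonregular element
    set a := u with ha
    set b := p.1 with hb
    set c := p.2 with hc
    have hab : (a, b) ∈ D := hu
    have hbc : (b, c) ∈ D := by rwa [Prod.mk.eta]
    have hne_ab : a ≠ b := fun h => hloop b (h ▸ hab)
    have hne_bc : b ≠ c := fun h => hloop b (h ▸ hbc)
    have hne_ac : a ≠ c := by
      intro h
      exact hne_ab (dreach_antisymm hacyc (Relation.ReflTransGen.single hab)
        (Relation.ReflTransGen.single (h ▸ hbc)))
    set x : Fin n → Fin n :=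
      ([(b, c), (a, b)].foldl (fun f p => arcT p.1 p.2 ∘ f) id) with hxdef
    have hxmem : x ∈ genSg D := by
      refine ⟨[(b, c), (a, b)], by simp, ?_, rfl⟩
      intro q hq
      simp only [List.mem_cons, List.mem_singleton, List.not_mem_nil, or_false] at hq
      rcases hq with rfl | rfl
      · exact hbc
      · exact hab
    have hxeval : ∀ v, x v = arcT a b (arcT b c v) := fun v => rfl
    have hxa : x a = b := by simp [hxeval, arcT, hne_ab]
    obtain ⟨y, hy, hreg⟩ := h3 x hxmem
    have key : x (y (x a)) = x a := congrFun hreg a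
    rw [hxa] at key
    -- key : x (y b) = b ; show y b = a
    have hyba : y b = a := by
      by_contra hwa
      rw [hxeval] at key
      by_cases hwb : y b = b
      · simp [arcT, hwb, hne_ab, hne_bc.symm, hne_ac.symm] at key
      · simp [arcT, hwb, hwa] at key
    have : dreach D b a := hyba ▸ dreach_genSg hy b
    exact hne_ab (dreach_antisymm hacyc (Relation.ReflTransGen.single hab) this)
  tfae_have 4 → 1 := by
    rintro ⟨V₁, V₂, hd, huniv, harc⟩ x hx
    obtain ⟨l, -, hl, rfl⟩ := hx
    have hprop := bip_foldl hd harc l hl id (fun v => ⟨fun _ => rfl, Or.inl rfl⟩)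
    funext v
    rcases (hprop v).1 with h | h
    · show (l.foldl _ id) ((l.foldl _ id) v) = _
      rw [h]
      exact h
    · exact (hprop _).2 h
  tfae_finish
end
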